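/- arXiv:0705.3629 — 9 statements merged into one kernel-verified Lean document; each statement's English description precedes it below -/
import Mathlib

section
/- Let f : ℝ → ℝ be a convex function and n a positive integer. Then the map A ↦ Tr f(A) is convex on the real vector space of n×n Hermitian complex matrices: for all Hermitian A, B and all θ ∈ [0,1], Tr f(θA + (1−θ)B) ≤ θ · Tr f(A) + (1−θ) · Tr f(B). -/
/-- `f` applied to a Hermitian matrix through a spectral decomposition
(continuous functional calculus): `f(A) = U · diag(f(λᵢ)) · U*`. -/
noncomputable def IsHermitian.applyFun {n : ℕ} {A : Matrix (Fin n) (Fin n) ℂ}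
    (hA : A.IsHermitian) (f : ℝ → ℝ) : Matrix (Fin n) (Fin n) ℂ :=
  (hA.eigenvectorUnitary : Matrix (Fin n) (Fin n) ℂ) *
    Matrix.diagonal (fun i => (f (hA.eigenvalues i) : ℂ)) *
    star (hA.eigenvectorUnitary : Matrix (Fin n) (Fin n) ℂ)

open Matrix in
/-- Peierls' inequality: for any unitary `U` and Hermitian `A`,
`∑ i, f((U* A U)ᵢᵢ) ≤ ∑ j, f(λⱼ(A))` when `f` is convex. -/
lemma peierls {n : ℕ} (f : ℝ → ℝ) (hf : ConvexOn ℝ Set.univ f)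
    {A : Matrix (Fin n) (Fin n) ℂ} (hA : A.IsHermitian)
    (U : Matrix.unitaryGroup (Fin n) ℂ) :
    ∑ i, f (((star (U : Matrix (Fin n) (Fin n) ℂ) * A *
        (U : Matrix (Fin n) (Fin n) ℂ)) i i).re) ≤
      ∑ j, f (hA.eigenvalues j) := by
  set V := hA.eigenvectorUnitary
  set Vm : Matrix (Fin n) (Fin n) ℂ := (V : Matrix (Fin n) (Fin n) ℂ) with hVm
  set Um : Matrix (Fin n) (Fin n) ℂ := (U : Matrix (Fin n) (Fin n) ℂ) with hUm
  have hV1 : Vm * star Vm = 1 := Matrix.mem_unitaryGroup_iff.mp V.2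
  have hV2 : star Vm * Vm = 1 := Matrix.mem_unitaryGroup_iff'.mp V.2
  have hU1 : Um * star Um = 1 := Matrix.mem_unitaryGroup_iff.mp U.2
  have hU2 : star Um * Um = 1 := Matrix.mem_unitaryGroup_iff'.mp U.2
  set W : Matrix (Fin n) (Fin n) ℂ := star Vm * Um with hW
  have hWstar : star W = star Um * Vm := by rw [hW, StarMul.star_mul, star_star]
  have hWsmul : star W * W = 1 := by
    rw [hWstar, hW, mul_assoc, ← mul_assoc Vm, hV1, one_mul, hU2]
  have hWmuls : W * star W = 1 := by
    rw [hWstar, hW, mul_assoc, ← mul_assoc Um, hU1, one_mul, hV2]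
  set D : Matrix (Fin n) (Fin n) ℂ :=
    Matrix.diagonal (fun j => ((hA.eigenvalues j : ℝ) : ℂ)) with hD
  have key : star Um * A * Um = star W * D * W := by
    have hAeq : A = Vm * D * star Vm := hA.spectral_theorem
    rw [hAeq, hWstar, hW]
    simp only [Matrix.mul_assoc]
  -- weights
  set w : Fin n → Fin n → ℝ := fun i j => Complex.normSq (W j i) with hw
  have hnormSq : ∀ (z : ℂ), (starRingEnd ℂ) z * z = (Complex.normSq z : ℂ) :=
    fun z => Complex.normSq_eq_conj_mul_self.symm
  have hentry : ∀ i, ((star Um * A * Um) i i).re = ∑ j, w i j • hA.eigenvalues j := by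
    intro i
    rw [key, Matrix.mul_apply, Complex.re_sum]
    refine Finset.sum_congr rfl fun j _ => ?_
    rw [Matrix.mul_apply]
    rw [Finset.sum_eq_single j (by intro b _ hb; simp [hD, Matrix.diagonal_apply_ne _ hb])
      (by intro h; simp at h)]
    simp only [hD, Matrix.diagonal_apply_eq, Matrix.star_apply]
    have h1 : star (W j i) * ((hA.eigenvalues j : ℂ)) * W j i
        = ((hA.eigenvalues j : ℝ) : ℂ) * (star (W j i) * W j i) := by ring
    rw [h1, Complex.star_def, hnormSq, ← Complex.ofReal_mul, Complex.ofReal_re]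
    simp [hw, smul_eq_mul, mul_comm]
  have hw0 : ∀ i j, 0 ≤ w i j := fun i j => Complex.normSq_nonneg _
  have hwrow : ∀ i, ∑ j, w i j = 1 := by
    intro i
    have h := congrFun (congrFun hWsmul i) i
    rw [Matrix.mul_apply] at h
    have h2 : ((∑ j, star W i j * W j i) : ℂ).re = 1 := by
      rw [h]; simp
    rw [Complex.re_sum] at h2
    rw [← h2]
    refine Finset.sum_congr rfl fun j _ => ?_
    rw [Matrix.star_apply, Complex.star_def, hnormSq, Complex.ofReal_re]
  have hwcol : ∀ j, ∑ i, w i j = 1 := by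
    intro j
    have h := congrFun (congrFun hWmuls j) j
    rw [Matrix.mul_apply] at h
    have h2 : ((∑ i, W j i * star W i j) : ℂ).re = 1 := by
      rw [h]; simp
    rw [Complex.re_sum] at h2
    rw [← h2]
    refine Finset.sum_congr rfl fun i _ => ?_
    rw [Matrix.star_apply, Complex.star_def, mul_comm, hnormSq, Complex.ofReal_re]
  calc ∑ i, f (((star Um * A * Um) i i).re)
      = ∑ i, f (∑ j, w i j • hA.eigenvalues j) :=
        Finset.sum_congr rfl fun i _ => by rw [hentry]
    _ ≤ ∑ i, ∑ j, w i j • f (hA.eigenvalues j) :=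
        Finset.sum_le_sum fun i _ =>
          hf.map_sum_le (fun j _ => hw0 i j) (hwrow i) (fun j _ => Set.mem_univ _)
    _ = ∑ j, f (hA.eigenvalues j) := by
        rw [Finset.sum_comm]
        refine Finset.sum_congr rfl fun j _ => ?_
        rw [← Finset.sum_smul, hwcol j, one_smul]

/-- Convexity of `A ↦ Tr f(A)` on Hermitian matrices, where
`Tr f(A) = ∑ᵢ f(λᵢ(A))`. -/
theorem trace_apply_convex {n : ℕ} (f : ℝ → ℝ) (hf : ConvexOn ℝ Set.univ f)
    (A B : Matrix (Fin n) (Fin n) ℂ) (hA : A.IsHermitian) (hB : B.IsHermitian)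
    (θ : ℝ) (hθ0 : 0 ≤ θ) (hθ1 : θ ≤ 1)
    (hC : (θ • A + (1 - θ) • B).IsHermitian) :
    ∑ i, f (hC.eigenvalues i) ≤
      θ * ∑ i, f (hA.eigenvalues i) + (1 - θ) * ∑ i, f (hB.eigenvalues i) := by
  have h10 : (0:ℝ) ≤ 1 - θ := by linarith
  set U := hC.eigenvectorUnitary with hU
  set Um : Matrix (Fin n) (Fin n) ℂ := (U : Matrix (Fin n) (Fin n) ℂ) with hUm
  set C : Matrix (Fin n) (Fin n) ℂ := θ • A + (1 - θ) • B with hCdef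
  have hdiag : star Um * C * Um = Matrix.diagonal (RCLike.ofReal ∘ hC.eigenvalues) :=
    by have := hC.conjStarAlgAut_star_eigenvectorUnitary; rwa [Unitary.conjStarAlgAut_star_apply] at this
  have heig : ∀ i, hC.eigenvalues i = ((star Um * C * Um) i i).re := by
    intro i
    rw [hdiag]
    simp
  have hsplit : ∀ i, ((star Um * C * Um) i i).re
      = θ * ((star Um * A * Um) i i).re + (1 - θ) * ((star Um * B * Um) i i).re := by
    intro i
    have hmat : star Um * C * Um = θ • (star Um * A * Um) + (1 - θ) • (star Um * B * Um) := by
      rw [hCdef]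
      simp only [Matrix.mul_add, Matrix.add_mul, mul_smul_comm, smul_mul_assoc]
    rw [hmat]
    simp [Matrix.add_apply, Matrix.smul_apply, Complex.real_smul]
  have h1 : ∑ i, f (hC.eigenvalues i)
      ≤ θ * ∑ i, f (((star Um * A * Um) i i).re)
        + (1 - θ) * ∑ i, f (((star Um * B * Um) i i).re) := by
    rw [Finset.mul_sum, Finset.mul_sum, ← Finset.sum_add_distrib]
    refine Finset.sum_le_sum fun i _ => ?_
    rw [heig i, hsplit i]
    have := hf.2 (Set.mem_univ (((star Um * A * Um) i i).re))
      (Set.mem_univ (((star Um * B * Um) i i).re)) hθ0 h10 (by ring)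
    simpa [smul_eq_mul] using this
  refine h1.trans ?_
  have hPA := peierls f hf hA U
  have hPB := peierls f hf hB U
  gcongr
end

section
/- Let 𝒜 be a complex unital Banach algebra, let B, X ∈ 𝒜, and let t ∈ ℝ. Then the map α ↦ exp(it(B+αX)) from ℝ to 𝒜 is differentiable, and for every α ∈ ℝ its derivative equals i·∫₀ᵗ exp(is(B+αX)) · X · exp(i(t−s)(B+αX)) ds (a Bochner integral of a continuous 𝒜-valued function). -/
section Aux

open NormedSpace intervalIntegral Complex Nat

variable {𝒜 : Type*} [NormedRing 𝒜] [NormedAlgebra ℂ 𝒜] [CompleteSpace 𝒜]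

lemma my_norm_exp_le (x : 𝒜) {r : ℝ} (hx : ‖x‖ ≤ r) :
    ‖NormedSpace.exp x‖ ≤ max ‖(1:𝒜)‖ 1 * Real.exp r := by
  have hr : 0 ≤ r := le_trans (norm_nonneg x) hx
  have hpt : ∀ n : ℕ, ‖((n ! : ℂ)⁻¹) • x ^ n‖ ≤ max ‖(1:𝒜)‖ 1 * (r ^ n / n !) := by
    intro n
    rw [norm_smul]
    have h1 : ‖((n ! : ℂ))⁻¹‖ = (n ! : ℝ)⁻¹ := by
      rw [norm_inv]; simp
    rw [h1]
    have h2 : ‖x ^ n‖ ≤ max ‖(1:𝒜)‖ 1 * r ^ n := by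
      rcases Nat.eq_zero_or_pos n with h | h
      · subst h; simpa using le_max_left ‖(1:𝒜)‖ 1
      · calc ‖x ^ n‖ ≤ ‖x‖ ^ n := norm_pow_le' x h
          _ ≤ r ^ n := pow_le_pow_left₀ (norm_nonneg x) hx n
          _ ≤ max ‖(1:𝒜)‖ 1 * r ^ n := by
              nlinarith [pow_nonneg hr n, le_max_right ‖(1:𝒜)‖ 1]
    calc (n ! : ℝ)⁻¹ * ‖x ^ n‖ ≤ (n ! : ℝ)⁻¹ * (max ‖(1:𝒜)‖ 1 * r ^ n) := by
          gcongr
      _ = max ‖(1:𝒜)‖ 1 * (r ^ n / n !) := by ring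
  have hsum2 : Summable fun n : ℕ => max ‖(1:𝒜)‖ 1 * (r ^ n / n !) :=
    (Real.summable_pow_div_factorial r).mul_left _
  have hsum : Summable fun n : ℕ => ‖((n ! : ℂ)⁻¹) • x ^ n‖ :=
    Summable.of_nonneg_of_le (fun n => norm_nonneg _) hpt hsum2
  rw [exp_eq_tsum ℂ]
  calc ‖∑' n : ℕ, ((n ! : ℂ)⁻¹) • x ^ n‖ ≤ ∑' n, ‖((n ! : ℂ)⁻¹) • x ^ n‖ :=
        norm_tsum_le_tsum_norm hsum
    _ ≤ ∑' n, max ‖(1:𝒜)‖ 1 * (r ^ n / n !) := Summable.tsum_le_tsum hpt hsum hsum2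
    _ = max ‖(1:𝒜)‖ 1 * ∑' n, (r ^ n / n !) := tsum_mul_left
    _ = max ‖(1:𝒜)‖ 1 * Real.exp r := by
        rw [Real.exp_eq_exp_ℝ, exp_eq_tsum_div]

lemma my_exp_real_deriv (M : 𝒜) (u : ℝ) :
    HasDerivAt (fun v : ℝ => NormedSpace.exp (v • M)) (NormedSpace.exp (u • M) * M) u := by
  have := hasDerivAt_exp_smul_const (𝕂 := ℝ) M u
  exact this

lemma my_cont (M M' N : 𝒜) :
    Continuous fun u : ℝ => NormedSpace.exp (u • M) * N * NormedSpace.exp ((1 - u) • M') :=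
  (((continuous_iff_continuousAt.2 fun x => (exp_analytic (𝕂 := ℂ) x).continuousAt : Continuous (NormedSpace.exp : 𝒜 → 𝒜)).comp (continuous_id.smul continuous_const)).mul
      continuous_const).mul
    ((continuous_iff_continuousAt.2 fun x => (exp_analytic (𝕂 := ℂ) x).continuousAt : Continuous (NormedSpace.exp : 𝒜 → 𝒜)).comp ((continuous_const.sub continuous_id).smul continuous_const))

lemma my_exp_real_deriv' (M : 𝒜) (u : ℝ) :
    HasDerivAt (fun v : ℝ => NormedSpace.exp (v • M)) (M * NormedSpace.exp (u • M)) u := by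
  have := hasDerivAt_exp_smul_const' (𝕂 := ℝ) M u
  exact this

lemma my_duhamel (A E : 𝒜) :
    NormedSpace.exp (A + E) - NormedSpace.exp A =
      ∫ u in (0:ℝ)..1, NormedSpace.exp (u • (A + E)) * E * NormedSpace.exp ((1 - u) • A) := by
  have hderiv : ∀ u ∈ Set.uIcc (0:ℝ) 1,
      HasDerivAt (fun v : ℝ => NormedSpace.exp (v • (A + E)) * NormedSpace.exp ((1 - v) • A))
        (NormedSpace.exp (u • (A + E)) * E * NormedSpace.exp ((1 - u) • A)) u := by
    intro u _
    have h1 := my_exp_real_deriv (A + E) u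
    have h2 : HasDerivAt (fun v : ℝ => NormedSpace.exp ((1 - v) • A))
        ((-1 : ℝ) • (A * NormedSpace.exp ((1 - u) • A))) u := by
      have hin : HasDerivAt (fun w : ℝ => NormedSpace.exp (w • A)) (A * NormedSpace.exp ((1 - u) • A)) (1 - u) :=
        my_exp_real_deriv' A (1 - u)
      have hout : HasDerivAt (fun v : ℝ => 1 - v) (-1 : ℝ) u := by
        simpa using (hasDerivAt_id u).const_sub 1
      exact hin.scomp u hout
    have := h1.mul h2
    convert this using 1
    · rfl
    simp only [neg_one_smul, mul_neg]
    noncomm_ring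
  have hint : IntervalIntegrable
      (fun u : ℝ => NormedSpace.exp (u • (A + E)) * E * NormedSpace.exp ((1 - u) • A)) MeasureTheory.volume 0 1 :=
    (my_cont (A + E) A E).intervalIntegrable 0 1
  have := intervalIntegral.integral_eq_sub_of_hasDerivAt hderiv hint
  rw [this]
  simp [NormedSpace.exp_zero]

lemma my_exp_diff_bound (A D : 𝒜) {r : ℝ} (h1 : ‖A + D‖ ≤ r) (h2 : ‖A‖ ≤ r) :
    ‖NormedSpace.exp (A + D) - NormedSpace.exp A‖ ≤
      ‖D‖ * ((max ‖(1:𝒜)‖ 1 * Real.exp r) * (max ‖(1:𝒜)‖ 1 * Real.exp r)) := by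
  have hr : 0 ≤ r := le_trans (norm_nonneg A) h2
  set K := max ‖(1:𝒜)‖ 1 * Real.exp r with hK
  have hK0 : 0 ≤ K := by positivity
  rw [my_duhamel A D]
  have hb : ∀ v ∈ Set.uIoc (0:ℝ) 1,
      ‖NormedSpace.exp (v • (A + D)) * D * NormedSpace.exp ((1 - v) • A)‖ ≤ K * ‖D‖ * K := by
    intro v hv
    rw [Set.uIoc_of_le zero_le_one] at hv
    obtain ⟨hv0, hv1⟩ := hv
    have e1 : ‖NormedSpace.exp (v • (A + D))‖ ≤ K := by
      apply my_norm_exp_le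
      rw [norm_smul, Real.norm_eq_abs, _root_.abs_of_pos hv0]
      nlinarith [norm_nonneg (A + D)]
    have e2 : ‖NormedSpace.exp ((1 - v) • A)‖ ≤ K := by
      apply my_norm_exp_le
      rw [norm_smul, Real.norm_eq_abs, _root_.abs_of_nonneg (by linarith : (0:ℝ) ≤ 1 - v)]
      nlinarith [norm_nonneg A]
    calc ‖NormedSpace.exp (v • (A + D)) * D * NormedSpace.exp ((1 - v) • A)‖
        ≤ ‖NormedSpace.exp (v • (A + D)) * D‖ * ‖NormedSpace.exp ((1 - v) • A)‖ := norm_mul_le _ _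
      _ ≤ ‖NormedSpace.exp (v • (A + D))‖ * ‖D‖ * ‖NormedSpace.exp ((1 - v) • A)‖ := by
          gcongr; exact norm_mul_le _ _
      _ ≤ K * ‖D‖ * K := by gcongr
  have := intervalIntegral.norm_integral_le_of_norm_le_const hb
  simp only [sub_zero, abs_one, mul_one] at this
  calc ‖∫ v in (0:ℝ)..1, NormedSpace.exp (v • (A + D)) * D * NormedSpace.exp ((1 - v) • A)‖
      ≤ K * ‖D‖ * K := this
    _ = ‖D‖ * (K * K) := by ring

lemma my_key (P Q : 𝒜) (α : ℝ) :
    HasDerivAt (fun a : ℝ => NormedSpace.exp (P + a • Q))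
      (∫ u in (0:ℝ)..1,
        NormedSpace.exp (u • (P + α • Q)) * Q * NormedSpace.exp ((1 - u) • (P + α • Q))) α := by
  set A := P + α • Q with hA
  set L := ∫ u in (0:ℝ)..1, NormedSpace.exp (u • A) * Q * NormedSpace.exp ((1 - u) • A) with hL
  have hPQ : ∀ a : ℝ, P + a • Q = A + (a - α) • Q := by
    intro a; rw [hA, sub_smul]; abel
  set K := max ‖(1:𝒜)‖ 1 * Real.exp (‖A‖ + ‖Q‖) with hKdef
  have hK0 : 0 < K := by positivity
  set C := ‖Q‖ * (K * K) * ‖Q‖ * K with hCdef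
  have hC0 : 0 ≤ C := by positivity
  rw [hasDerivAt_iff_isLittleO]
  rw [Asymptotics.isLittleO_iff]
  intro c hc
  have hδ : 0 < min 1 (c / (C + 1)) := lt_min one_pos (by positivity)
  filter_upwards [Metric.ball_mem_nhds α hδ] with a ha
  rw [Metric.mem_ball, Real.dist_eq] at ha
  have ha1 : |a - α| ≤ 1 := le_of_lt (lt_of_lt_of_le ha (min_le_left _ _))
  have ha2 : |a - α| ≤ c / (C + 1) := le_of_lt (lt_of_lt_of_le ha (min_le_right _ _))
  -- integrability facts
  have hint1 : IntervalIntegrable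
      (fun u : ℝ => NormedSpace.exp (u • (A + (a - α) • Q)) * Q * NormedSpace.exp ((1 - u) • A))
      MeasureTheory.volume 0 1 := (my_cont _ _ _).intervalIntegrable 0 1
  have hint2 : IntervalIntegrable
      (fun u : ℝ => NormedSpace.exp (u • A) * Q * NormedSpace.exp ((1 - u) • A))
      MeasureTheory.volume 0 1 := (my_cont _ _ _).intervalIntegrable 0 1
  -- the difference identity
  have hdiff : NormedSpace.exp (P + a • Q) - NormedSpace.exp (P + α • Q) - (a - α) • L
      = (a - α) • ∫ u in (0:ℝ)..1,
          (NormedSpace.exp (u • (A + (a - α) • Q)) - NormedSpace.exp (u • A)) * Q * NormedSpace.exp ((1 - u) • A) := by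
    rw [hPQ a, ← hA, my_duhamel A ((a - α) • Q)]
    have hptw : ∀ u : ℝ, NormedSpace.exp (u • (A + (a - α) • Q)) * ((a - α) • Q) * NormedSpace.exp ((1 - u) • A)
        = (a - α) • (NormedSpace.exp (u • (A + (a - α) • Q)) * Q * NormedSpace.exp ((1 - u) • A)) := by
      intro u; rw [mul_smul_comm, smul_mul_assoc]
    simp only [hptw]
    rw [intervalIntegral.integral_smul, hL, ← smul_sub,
      ← intervalIntegral.integral_sub hint1 hint2]
    congr 1
    apply intervalIntegral.integral_congr
    intro u _
    simp [sub_mul]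
  rw [hdiff]
  -- pointwise bound on the integrand
  have hb : ∀ u ∈ Set.uIoc (0:ℝ) 1,
      ‖(NormedSpace.exp (u • (A + (a - α) • Q)) - NormedSpace.exp (u • A)) * Q * NormedSpace.exp ((1 - u) • A)‖
        ≤ |a - α| * C := by
    intro u hu
    rw [Set.uIoc_of_le zero_le_one] at hu
    obtain ⟨hu0, hu1⟩ := hu
    have hQn : 0 ≤ ‖Q‖ := norm_nonneg Q
    have hstep : ‖NormedSpace.exp (u • (A + (a - α) • Q)) - NormedSpace.exp (u • A)‖
        ≤ |a - α| * ‖Q‖ * (K * K) := by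
      have h1 : u • (A + (a - α) • Q) = u • A + u • ((a - α) • Q) := by rw [smul_add]
      rw [h1]
      have hbd := my_exp_diff_bound (u • A) (u • ((a - α) • Q))
        (r := ‖A‖ + ‖Q‖) ?_ ?_
      · refine le_trans hbd ?_
        rw [← hKdef]
        have : ‖u • ((a - α) • Q)‖ ≤ |a - α| * ‖Q‖ := by
          rw [norm_smul, norm_smul, Real.norm_eq_abs, Real.norm_eq_abs,
            _root_.abs_of_pos hu0]
          nlinarith [abs_nonneg (a - α), hQn, hu1, hu0, mul_nonneg (abs_nonneg (a - α)) hQn]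
        nlinarith [mul_nonneg (mul_nonneg (abs_nonneg (a-α)) hQn) (mul_nonneg hK0.le hK0.le),
          norm_nonneg (u • ((a - α) • Q)), mul_pos hK0 hK0]
      · rw [← h1, norm_smul, Real.norm_eq_abs, _root_.abs_of_pos hu0]
        have : ‖A + (a - α) • Q‖ ≤ ‖A‖ + ‖Q‖ := by
          refine le_trans (norm_add_le _ _) ?_
          rw [norm_smul, Real.norm_eq_abs]
          nlinarith [norm_nonneg A, abs_nonneg (a - α)]
        nlinarith [norm_nonneg (A + (a - α) • Q)]
      · rw [norm_smul, Real.norm_eq_abs, _root_.abs_of_pos hu0]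
        nlinarith [norm_nonneg A]
    have he2 : ‖NormedSpace.exp ((1 - u) • A)‖ ≤ K := by
      apply my_norm_exp_le
      rw [norm_smul, Real.norm_eq_abs, _root_.abs_of_nonneg (by linarith : (0:ℝ) ≤ 1 - u)]
      nlinarith [norm_nonneg A]
    calc ‖(NormedSpace.exp (u • (A + (a - α) • Q)) - NormedSpace.exp (u • A)) * Q * NormedSpace.exp ((1 - u) • A)‖
        ≤ ‖(NormedSpace.exp (u • (A + (a - α) • Q)) - NormedSpace.exp (u • A)) * Q‖ * ‖NormedSpace.exp ((1 - u) • A)‖ :=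
          norm_mul_le _ _
      _ ≤ ‖NormedSpace.exp (u • (A + (a - α) • Q)) - NormedSpace.exp (u • A)‖ * ‖Q‖ * ‖NormedSpace.exp ((1 - u) • A)‖ := by
          gcongr; exact norm_mul_le _ _
      _ ≤ (|a - α| * ‖Q‖ * (K * K)) * ‖Q‖ * K := by gcongr
      _ = |a - α| * C := by rw [hCdef]; ring
  have hIb := intervalIntegral.norm_integral_le_of_norm_le_const hb
  simp only [sub_zero, abs_one, mul_one] at hIb
  rw [norm_smul, Real.norm_eq_abs]
  calc |a - α| * ‖∫ u in (0:ℝ)..1,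
        (NormedSpace.exp (u • (A + (a - α) • Q)) - NormedSpace.exp (u • A)) * Q * NormedSpace.exp ((1 - u) • A)‖
      ≤ |a - α| * (|a - α| * C) := by gcongr
    _ ≤ |a - α| * c := by
        have : |a - α| * C ≤ c := by
          have h2 : |a - α| * (C + 1) ≤ c := by
            rw [le_div_iff₀ (by positivity : (0:ℝ) < C + 1)] at ha2
            exact ha2
          nlinarith [abs_nonneg (a - α)]
        nlinarith [abs_nonneg (a - α)]
    _ = c * ‖a - α‖ := by rw [Real.norm_eq_abs]; ring

theorem hasDerivAt_exp_interpolation' (B X : 𝒜) (t : ℝ) :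
    ∀ α : ℝ,
      HasDerivAt
        (fun a : ℝ => NormedSpace.exp ((Complex.I * (t : ℂ)) • (B + (a : ℂ) • X)))
        (Complex.I •
          ∫ s in (0:ℝ)..t,
            NormedSpace.exp ((Complex.I * (s : ℂ)) • (B + (α : ℂ) • X)) * X *
              NormedSpace.exp ((Complex.I * ((t : ℂ) - (s : ℂ))) • (B + (α : ℂ) • X)))
        α := by
  intro α
  set M := B + (α : ℂ) • X with hM
  have hfun : ∀ a : ℝ, (Complex.I * (t:ℂ)) • (B + (a:ℂ) • X)
      = (Complex.I * (t:ℂ)) • B + a • ((Complex.I * (t:ℂ)) • X) := by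
    intro a
    rw [smul_add, smul_comm, Complex.coe_smul]
  have hkey := my_key ((Complex.I * (t:ℂ)) • B) ((Complex.I * (t:ℂ)) • X) α
  have hPA : (Complex.I * (t:ℂ)) • B + α • ((Complex.I * (t:ℂ)) • X)
      = (Complex.I * (t:ℂ)) • M := by rw [hM, ← hfun α]
  rw [hPA] at hkey
  have e1 : ∀ u : ℝ, u • ((Complex.I * (t:ℂ)) • M) = (Complex.I * ((u*t : ℝ) : ℂ)) • M := by
    intro u; rw [← Complex.coe_smul, smul_smul]; congr 1; push_cast; ring
  have e2 : ∀ u : ℝ, (1 - u) • ((Complex.I * (t:ℂ)) • M)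
      = (Complex.I * ((t:ℂ) - ((u*t : ℝ) : ℂ))) • M := by
    intro u; rw [← Complex.coe_smul, smul_smul]; congr 1; push_cast; ring
  have hval : (∫ u in (0:ℝ)..1,
        NormedSpace.exp (u • ((Complex.I * (t:ℂ)) • M)) * ((Complex.I * (t:ℂ)) • X) *
          NormedSpace.exp ((1 - u) • ((Complex.I * (t:ℂ)) • M)))
      = Complex.I • ∫ s in (0:ℝ)..t,
          NormedSpace.exp ((Complex.I * (s:ℂ)) • M) * X * NormedSpace.exp ((Complex.I * ((t:ℂ) - (s:ℂ))) • M) := by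
    calc (∫ u in (0:ℝ)..1,
          NormedSpace.exp (u • ((Complex.I * (t:ℂ)) • M)) * ((Complex.I * (t:ℂ)) • X) *
            NormedSpace.exp ((1 - u) • ((Complex.I * (t:ℂ)) • M)))
        = ∫ u in (0:ℝ)..1, (Complex.I * (t:ℂ)) •
            (NormedSpace.exp ((Complex.I * ((u*t : ℝ) : ℂ)) • M) * X *
              NormedSpace.exp ((Complex.I * ((t:ℂ) - ((u*t : ℝ) : ℂ))) • M)) := by
          apply intervalIntegral.integral_congr
          intro u _
          simp only [e1, e2, mul_smul_comm, smul_mul_assoc,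
            show ((1:ℝ)-u)*t = t - u*t from by ring, Complex.ofReal_sub]
      _ = (Complex.I * (t:ℂ)) • ∫ u in (0:ℝ)..1,
            NormedSpace.exp ((Complex.I * ((u*t : ℝ) : ℂ)) • M) * X *
              NormedSpace.exp ((Complex.I * ((t:ℂ) - ((u*t : ℝ) : ℂ))) • M) :=
          intervalIntegral.integral_smul _ _
      _ = Complex.I • ((t : ℝ) • ∫ u in (0:ℝ)..1,
            NormedSpace.exp ((Complex.I * ((u*t : ℝ) : ℂ)) • M) * X *
              NormedSpace.exp ((Complex.I * ((t:ℂ) - ((u*t : ℝ) : ℂ))) • M)) := by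
          rw [← Complex.coe_smul, smul_smul]
      _ = Complex.I • ∫ s in (0:ℝ)..t,
            NormedSpace.exp ((Complex.I * (s:ℂ)) • M) * X * NormedSpace.exp ((Complex.I * ((t:ℂ) - (s:ℂ))) • M) := by
          congr 1
          have := intervalIntegral.smul_integral_comp_mul_right
            (f := fun s : ℝ => NormedSpace.exp ((Complex.I * (s:ℂ)) • M) * X *
              NormedSpace.exp ((Complex.I * ((t:ℂ) - (s:ℂ))) • M)) (a := (0:ℝ)) (b := (1:ℝ)) t
          simpa using this
  rw [hval] at hkey
  simp only [hfun]
  exact hkey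

end Aux



/-- For `B, X` in a complex unital Banach algebra and `t ∈ ℝ`, the map
`α ↦ exp(it(B+αX))` is differentiable on `ℝ` with derivative
`i·∫₀ᵗ exp(is(B+αX)) X exp(i(t−s)(B+αX)) ds` at every `α`. -/
theorem hasDerivAt_exp_interpolation {𝒜 : Type*} [NormedRing 𝒜] [NormedAlgebra ℂ 𝒜]
    [CompleteSpace 𝒜] (B X : 𝒜) (t : ℝ) :
    ∀ α : ℝ,
      HasDerivAt
        (fun a : ℝ => NormedSpace.exp ((Complex.I * (t : ℂ)) • (B + (a : ℂ) • X)))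
        (Complex.I •
          ∫ s in (0:ℝ)..t,
            NormedSpace.exp ((Complex.I * (s : ℂ)) • (B + (α : ℂ) • X)) * X *
              NormedSpace.exp ((Complex.I * ((t : ℂ) - (s : ℂ))) • (B + (α : ℂ) • X)))
        α :=
  hasDerivAt_exp_interpolation' B X t
end

section
/- (Birman–Solomyak bound, finite-dimensional case.) Let A, B be n×n Hermitian complex matrices, let [a,b] be an interval containing all eigenvalues of A and of B, and let f : ℝ → ℝ satisfy |f(s) − f(t)| ≤ L·|s − t| for all s, t ∈ [a,b]. Then ‖f(A) − f(B)‖_F ≤ L · ‖A − B‖_F. -/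
/-- The Frobenius (Hilbert–Schmidt) norm of a complex matrix. -/
noncomputable def frobeniusNorm {n : ℕ} (X : Matrix (Fin n) (Fin n) ℂ) : ℝ :=
  Real.sqrt (∑ i, ∑ j, ‖X i j‖ ^ 2)

lemma sum_sq_eq_trace {n : ℕ} (M : Matrix (Fin n) (Fin n) ℂ) :
    ∑ i, ∑ j, ‖M i j‖ ^ 2 = (Matrix.trace (star M * M)).re := by
  have key : ∀ z : ℂ, ‖z‖ ^ 2 = (star z * z).re := by
    intro z
    rw [Complex.star_def, Complex.mul_re, Complex.conj_re, Complex.conj_im,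
      Complex.sq_norm, Complex.normSq_apply]
    ring
  simp only [Matrix.trace, Matrix.diag, Matrix.mul_apply, Matrix.star_eq_conjTranspose,
    Matrix.conjTranspose_apply, Complex.re_sum]
  rw [Finset.sum_comm]
  exact Finset.sum_congr rfl fun i _ => Finset.sum_congr rfl fun j _ => key (M j i)

lemma conj_sum_sq {n : ℕ} (U V : Matrix (Fin n) (Fin n) ℂ)
    (hU : U * star U = 1) (hV : V * star V = 1) (X : Matrix (Fin n) (Fin n) ℂ) :
    ∑ i, ∑ j, ‖(star U * X * V) i j‖ ^ 2 = ∑ i, ∑ j, ‖X i j‖ ^ 2 := by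
  rw [sum_sq_eq_trace, sum_sq_eq_trace]
  congr 1
  have h1 : star (star U * X * V) * (star U * X * V) = star V * (star X * X) * V := by
    simp only [star_mul, star_star]
    have : star V * (star X * U) * (star U * X * V)
        = star V * star X * (U * star U) * X * V := by noncomm_ring
    rw [this, hU]
    noncomm_ring
  rw [h1, Matrix.trace_mul_cycle, hV, one_mul]

lemma sandwich_left {n : ℕ} (U V D : Matrix (Fin n) (Fin n) ℂ) (hU' : star U * U = 1) :
    star U * (U * D * star U) * V = D * (star U * V) := by
  have : star U * (U * D * star U) * V = (star U * U) * D * (star U * V) := by noncomm_ring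
  rw [this, hU', one_mul]

lemma sandwich_right {n : ℕ} (U V D : Matrix (Fin n) (Fin n) ℂ) (hV' : star V * V = 1) :
    star U * (V * D * star V) * V = (star U * V) * D := by
  have : star U * (V * D * star V) * V = (star U * V) * D * (star V * V) := by noncomm_ring
  rw [this, hV', mul_one]

/-- **Birman–Solomyak bound, finite-dimensional case.** If all eigenvalues of the
Hermitian matrices `A` and `B` lie in `[a,b]` and `f` is Lipschitz with constant `L`
on `[a,b]`, then `‖f(A) − f(B)‖_F ≤ L·‖A − B‖_F`. -/
theorem frobenius_norm_applyFun_sub_le {n : ℕ} (A B : Matrix (Fin n) (Fin n) ℂ)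
    (hA : A.IsHermitian) (hB : B.IsHermitian) (a b L : ℝ)
    (hAab : ∀ i, hA.eigenvalues i ∈ Set.Icc a b)
    (hBab : ∀ i, hB.eigenvalues i ∈ Set.Icc a b)
    (f : ℝ → ℝ) (hf : ∀ s ∈ Set.Icc a b, ∀ t ∈ Set.Icc a b, |f s - f t| ≤ L * |s - t|) :
    frobeniusNorm (IsHermitian.applyFun hA f - IsHermitian.applyFun hB f) ≤
      L * frobeniusNorm (A - B) := by
  let U : Matrix (Fin n) (Fin n) ℂ := (hA.eigenvectorUnitary : Matrix (Fin n) (Fin n) ℂ)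
  let V : Matrix (Fin n) (Fin n) ℂ := (hB.eigenvectorUnitary : Matrix (Fin n) (Fin n) ℂ)
  have hU : U * star U = 1 := Matrix.mem_unitaryGroup_iff.mp hA.eigenvectorUnitary.2
  have hV : V * star V = 1 := Matrix.mem_unitaryGroup_iff.mp hB.eigenvectorUnitary.2
  have hU' : star U * U = 1 := Matrix.mem_unitaryGroup_iff'.mp hA.eigenvectorUnitary.2
  have hV' : star V * V = 1 := Matrix.mem_unitaryGroup_iff'.mp hB.eigenvectorUnitary.2
  let W : Matrix (Fin n) (Fin n) ℂ := star U * V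
  have hM : ∀ i j, (star U * (IsHermitian.applyFun hA f - IsHermitian.applyFun hB f) * V) i j
      = ((f (hA.eigenvalues i) : ℂ) - (f (hB.eigenvalues j) : ℂ)) * W i j := by
    intro i j
    have e1 : star U * IsHermitian.applyFun hA f * V
        = Matrix.diagonal (fun i => (f (hA.eigenvalues i) : ℂ)) * W :=
      sandwich_left U V _ hU'
    have e2 : star U * IsHermitian.applyFun hB f * V
        = W * Matrix.diagonal (fun j => (f (hB.eigenvalues j) : ℂ)) :=
      sandwich_right U V _ hV'
    rw [Matrix.mul_sub, Matrix.sub_mul, e1, e2, Matrix.sub_apply, Matrix.diagonal_mul,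
      Matrix.mul_diagonal, sub_mul]
    ring
  have hN : ∀ i j, (star U * (A - B) * V) i j
      = ((hA.eigenvalues i : ℂ) - (hB.eigenvalues j : ℂ)) * W i j := by
    intro i j
    have e1 : star U * A * V = Matrix.diagonal (fun i => (hA.eigenvalues i : ℂ)) * W := by
      conv_lhs => rw [hA.spectral_theorem]
      exact sandwich_left U V _ hU'
    have e2 : star U * B * V = W * Matrix.diagonal (fun j => (hB.eigenvalues j : ℂ)) := by
      conv_lhs => rw [hB.spectral_theorem]
      exact sandwich_right U V _ hV'
    rw [Matrix.mul_sub, Matrix.sub_mul, e1, e2, Matrix.sub_apply, Matrix.diagonal_mul,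
      Matrix.mul_diagonal, sub_mul]
    ring
  have keyF : frobeniusNorm (IsHermitian.applyFun hA f - IsHermitian.applyFun hB f)
      = Real.sqrt (∑ i, ∑ j,
          ‖((f (hA.eigenvalues i) : ℂ) - (f (hB.eigenvalues j) : ℂ)) * W i j‖ ^ 2) := by
    rw [frobeniusNorm, ← conj_sum_sq U V hU hV]
    congr 1
    exact Finset.sum_congr rfl fun i _ => Finset.sum_congr rfl fun j _ => by rw [hM i j]
  have keyAB : frobeniusNorm (A - B)
      = Real.sqrt (∑ i, ∑ j,
          ‖((hA.eigenvalues i : ℂ) - (hB.eigenvalues j : ℂ)) * W i j‖ ^ 2) := by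
    rw [frobeniusNorm, ← conj_sum_sq U V hU hV]
    congr 1
    exact Finset.sum_congr rfl fun i _ => Finset.sum_congr rfl fun j _ => by rw [hN i j]
  have hterm : ∀ i j, ‖((f (hA.eigenvalues i) : ℂ) - (f (hB.eigenvalues j) : ℂ)) * W i j‖ ^ 2
      ≤ L ^ 2 * ‖((hA.eigenvalues i : ℂ) - (hB.eigenvalues j : ℂ)) * W i j‖ ^ 2 := by
    intro i j
    have hlip := hf (hA.eigenvalues i) (hAab i) (hB.eigenvalues j) (hBab j)
    have h1 : ‖((f (hA.eigenvalues i) : ℂ) - (f (hB.eigenvalues j) : ℂ))‖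
        = |f (hA.eigenvalues i) - f (hB.eigenvalues j)| := by
      rw [← Complex.ofReal_sub, Complex.norm_real, Real.norm_eq_abs]
    have h2 : ‖((hA.eigenvalues i : ℂ) - (hB.eigenvalues j : ℂ))‖
        = |hA.eigenvalues i - hB.eigenvalues j| := by
      rw [← Complex.ofReal_sub, Complex.norm_real, Real.norm_eq_abs]
    rw [norm_mul, norm_mul, mul_pow, mul_pow, h1, h2, ← mul_assoc]
    gcongr
    calc |f (hA.eigenvalues i) - f (hB.eigenvalues j)| ^ 2
        ≤ (L * |hA.eigenvalues i - hB.eigenvalues j|) ^ 2 := by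
          apply sq_le_sq' _ hlip
          linarith [abs_nonneg (f (hA.eigenvalues i) - f (hB.eigenvalues j))]
      _ = L ^ 2 * |hA.eigenvalues i - hB.eigenvalues j| ^ 2 := by ring
  have hsum : (∑ i, ∑ j, ‖((f (hA.eigenvalues i) : ℂ) - (f (hB.eigenvalues j) : ℂ)) * W i j‖ ^ 2)
      ≤ L ^ 2 * ∑ i, ∑ j, ‖((hA.eigenvalues i : ℂ) - (hB.eigenvalues j : ℂ)) * W i j‖ ^ 2 := by
    rw [Finset.mul_sum]
    refine Finset.sum_le_sum fun i _ => ?_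
    rw [Finset.mul_sum]
    exact Finset.sum_le_sum fun j _ => hterm i j
  rcases le_or_gt 0 L with hL | hL
  · rw [keyF, keyAB]
    calc Real.sqrt (∑ i, ∑ j,
          ‖((f (hA.eigenvalues i) : ℂ) - (f (hB.eigenvalues j) : ℂ)) * W i j‖ ^ 2)
        ≤ Real.sqrt (L ^ 2 * ∑ i, ∑ j,
            ‖((hA.eigenvalues i : ℂ) - (hB.eigenvalues j : ℂ)) * W i j‖ ^ 2) :=
          Real.sqrt_le_sqrt hsum
      _ = L * Real.sqrt (∑ i, ∑ j,
            ‖((hA.eigenvalues i : ℂ) - (hB.eigenvalues j : ℂ)) * W i j‖ ^ 2) := by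
          rw [Real.sqrt_mul (sq_nonneg L), Real.sqrt_sq hL]
  · have heig : ∀ i j, hA.eigenvalues i = hB.eigenvalues j := by
      intro i j
      by_contra h
      have hpos : 0 < |hA.eigenvalues i - hB.eigenvalues j| := abs_pos.mpr (sub_ne_zero.mpr h)
      have := hf (hA.eigenvalues i) (hAab i) (hB.eigenvalues j) (hBab j)
      nlinarith [abs_nonneg (f (hA.eigenvalues i) - f (hB.eigenvalues j))]
    have hz : (∑ i, ∑ j, ‖((hA.eigenvalues i : ℂ) - (hB.eigenvalues j : ℂ)) * W i j‖ ^ 2) = 0 :=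
      Finset.sum_eq_zero fun i _ => Finset.sum_eq_zero fun j _ => by rw [heig i j]; simp
    have hz' : (∑ i, ∑ j,
        ‖((f (hA.eigenvalues i) : ℂ) - (f (hB.eigenvalues j) : ℂ)) * W i j‖ ^ 2) = 0 :=
      Finset.sum_eq_zero fun i _ => Finset.sum_eq_zero fun j _ => by rw [heig i j]; simp
    rw [keyF, keyAB, hz, hz']
    simp
end

section
/- (Krein trace formula, finite-dimensional case.) Let A, B be n×n Hermitian complex matrices with eigenvalues a_1,…,a_n and b_1,…,b_n counted with multiplicity, and define ξ : ℝ → ℤ by ξ(λ) = #{ j : b_j < λ } − #{ j : a_j < λ }. Then: (i) |ξ(λ)| ≤ n for all λ, and ξ(λ) = 0 whenever λ ≤ min of all eigenvalues of A and B or λ > max of all eigenvalues of A and B; (ii) for every continuously differentiable f : ℝ → ℝ, Tr f(A) − Tr f(B) = ∫_ℝ f′(λ) ξ(λ) dλ; (iii) ∫_ℝ ξ(λ) dλ = Tr(A − B). -/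
open MeasureTheory Set

private lemma krein_aux_trace {n : ℕ} (A : Matrix (Fin n) (Fin n) ℂ)
    (hA : A.IsHermitian) : A.trace = ∑ i, (hA.eigenvalues i : ℂ) := by
  conv_lhs => rw [hA.spectral_theorem, Unitary.conjStarAlgAut_apply]
  rw [Matrix.trace_mul_cycle,
    Matrix.mem_unitaryGroup_iff'.mp (hA.eigenvectorUnitary).2, Matrix.one_mul,
    Matrix.trace_diagonal]
  simp

/-- **Krein trace formula, finite-dimensional case.** For Hermitian matrices `A`, `B`
with eigenvalues `aⱼ`, `bⱼ`, the spectral shift function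
`ξ(λ) = #{j : bⱼ < λ} − #{j : aⱼ < λ}` satisfies `|ξ| ≤ n`, vanishes below the
smallest and above the largest eigenvalue, obeys
`Tr f(A) − Tr f(B) = ∫ f′(λ) ξ(λ) dλ` for `C¹` functions `f`, and
`∫ ξ(λ) dλ = Tr(A − B)`. -/
theorem krein_trace_formula_finiteDim {n : ℕ} (A B : Matrix (Fin n) (Fin n) ℂ)
    (hA : A.IsHermitian) (hB : B.IsHermitian) (ξ : ℝ → ℤ)
    (hξ : ∀ x : ℝ,
      ξ x = ((Finset.univ.filter fun j => hB.eigenvalues j < x).card : ℤ)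
          - ((Finset.univ.filter fun j => hA.eigenvalues j < x).card : ℤ)) :
    (∀ x : ℝ, |ξ x| ≤ (n : ℤ)) ∧
    (∀ x : ℝ, (∀ j, x ≤ hA.eigenvalues j) → (∀ j, x ≤ hB.eigenvalues j) → ξ x = 0) ∧
    (∀ x : ℝ, (∀ j, hA.eigenvalues j < x) → (∀ j, hB.eigenvalues j < x) → ξ x = 0) ∧
    (∀ f : ℝ → ℝ, ContDiff ℝ 1 f →
      (∑ i, f (hA.eigenvalues i)) - (∑ i, f (hB.eigenvalues i))
        = ∫ x : ℝ, deriv f x * (ξ x : ℝ)) ∧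
    (((∫ x : ℝ, (ξ x : ℝ)) : ℂ) = Matrix.trace (A - B)) := by
  set a := hA.eigenvalues with ha
  set b := hB.eigenvalues with hb
  have key : ∀ f : ℝ → ℝ, ContDiff ℝ 1 f →
      (∑ i, f (a i)) - (∑ i, f (b i)) = ∫ x : ℝ, deriv f x * (ξ x : ℝ) := by
    intro f hf
    have hf' : Continuous (deriv f) := hf.continuous_deriv le_rfl
    have hdiff : Differentiable ℝ f := hf.differentiable one_ne_zero
    -- pointwise identity
    have hpt : ∀ x : ℝ, deriv f x * (ξ x : ℝ)
        = ∑ j, ((Ioc (b j) (a j)).indicator (deriv f) x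
              - (Ioc (a j) (b j)).indicator (deriv f) x) := by
      intro x
      have h1 : (ξ x : ℝ) = ∑ j, (((if b j < x then (1:ℝ) else 0))
          - (if a j < x then (1:ℝ) else 0)) := by
        rw [hξ x, Finset.sum_sub_distrib]
        push_cast [Finset.card_filter]
        rfl
      rw [h1, Finset.mul_sum]
      refine Finset.sum_congr rfl fun j _ => ?_
      by_cases h1 : b j < x <;> by_cases h2 : a j < x
      · simp [Set.indicator_apply, Set.mem_Ioc, h1, h2, not_le.mpr h1, not_le.mpr h2]
      · simp [Set.indicator_apply, Set.mem_Ioc, h1, h2, not_lt.mp h2]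
      · simp [Set.indicator_apply, Set.mem_Ioc, h1, h2, not_lt.mp h1]
      · simp [Set.indicator_apply, Set.mem_Ioc, h1, h2]
    have hint : ∀ u v : ℝ, Integrable ((Ioc u v).indicator (deriv f)) := by
      intro u v
      exact (hf'.integrableOn_Ioc).integrable_indicator measurableSet_Ioc
    have hint2 : ∀ j : Fin n, Integrable (fun x =>
        (Ioc (b j) (a j)).indicator (deriv f) x
          - (Ioc (a j) (b j)).indicator (deriv f) x) := fun j =>
      (hint _ _).sub (hint _ _)
    calc (∑ i, f (a i)) - (∑ i, f (b i))
        = ∑ j, (f (a j) - f (b j)) := (Finset.sum_sub_distrib _ _).symm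
      _ = ∑ j, ∫ x, ((Ioc (b j) (a j)).indicator (deriv f) x
              - (Ioc (a j) (b j)).indicator (deriv f) x) := by
          refine Finset.sum_congr rfl fun j _ => ?_
          rw [integral_sub (hint _ _) (hint _ _),
            integral_indicator measurableSet_Ioc, integral_indicator measurableSet_Ioc]
          have : ∫ x in (b j)..(a j), deriv f x = f (a j) - f (b j) :=
            intervalIntegral.integral_deriv_eq_sub (fun x _ => hdiff x)
              (hf'.intervalIntegrable _ _)
          rw [← this, intervalIntegral]
      _ = ∫ x, ∑ j, ((Ioc (b j) (a j)).indicator (deriv f) x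
              - (Ioc (a j) (b j)).indicator (deriv f) x) :=
          (integral_finset_sum _ fun j _ => hint2 j).symm
      _ = ∫ x, deriv f x * (ξ x : ℝ) := by
          simp only [hpt]
  refine ⟨?_, ?_, ?_, key, ?_⟩
  · intro x
    rw [hξ x]
    have h1 : (Finset.univ.filter fun j => b j < x).card ≤ n :=
      le_trans (Finset.card_filter_le _ _) (by simp)
    have h2 : (Finset.univ.filter fun j => a j < x).card ≤ n :=
      le_trans (Finset.card_filter_le _ _) (by simp)
    rw [abs_sub_le_iff]
    omega
  · intro x hxa hxb
    rw [hξ x]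
    have h1 : (Finset.univ.filter fun j => b j < x) = ∅ := by
      refine Finset.filter_false_of_mem fun j _ => not_lt.mpr (hxb j)
    have h2 : (Finset.univ.filter fun j => a j < x) = ∅ := by
      refine Finset.filter_false_of_mem fun j _ => not_lt.mpr (hxa j)
    simp [h1, h2]
  · intro x hxa hxb
    rw [hξ x]
    have h1 : (Finset.univ.filter fun j => b j < x) = Finset.univ :=
      Finset.filter_true_of_mem fun j _ => hxb j
    have h2 : (Finset.univ.filter fun j => a j < x) = Finset.univ :=
      Finset.filter_true_of_mem fun j _ => hxa j
    simp [h1, h2]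
  · have hid := key id contDiff_id
    simp only [id_eq] at hid
    have hderiv : ∀ x : ℝ, deriv (id : ℝ → ℝ) x = 1 := fun x => deriv_id x
    have heq : (fun x : ℝ => deriv (id : ℝ → ℝ) x * (ξ x : ℝ))
        = fun x : ℝ => (ξ x : ℝ) := funext fun x => by rw [hderiv, one_mul]
    have h3 : (∫ x : ℝ, (ξ x : ℝ)) = (∑ i, a i) - ∑ i, b i := by
      rw [hid, heq]
    have h4 : (∫ x : ℝ, ((ξ x : ℝ) : ℂ)) = ((∫ x : ℝ, (ξ x : ℝ) : ℝ) : ℂ) :=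
      integral_ofReal
    rw [h4, h3, Matrix.trace_sub, krein_aux_trace A hA, krein_aux_trace B hB]
    push_cast
    simp [ha, hb]
end

section
/- (Nonnegativity of the Koplienko spectral shift function, finite-dimensional case.) Let A, B be n×n Hermitian complex matrices, X = A − B, let (ψ_k)_{k=1}^n be an orthonormal basis of ℂⁿ with Bψ_k = b_k ψ_k (b_k ∈ ℝ), and let a_1,…,a_n be the eigenvalues of A counted with multiplicity. Define η : ℝ → ℝ by η(λ) = ∑_{k : b_k < λ} ⟨ψ_k, Xψ_k⟩ − ∑_{j=1}^n [ (λ − b_j)₊ − (λ − a_j)₊ ]. Then η(λ) ≥ 0 for Lebesgue-almost every λ ∈ ℝ. -/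
open Matrix MeasureTheory

/-- **Nonnegativity of the Koplienko spectral shift function, finite-dimensional
case.** With `X = A − B`, `(ψ_k)` an orthonormal eigenbasis of `B` with eigenvalues
`b_k`, and `a_j` the eigenvalues of `A`, the function
`η(λ) = ∑_{k : b_k < λ} ⟨ψ_k, Xψ_k⟩ − ∑_j [(λ−b_j)₊ − (λ−a_j)₊]` is nonnegative
Lebesgue-almost everywhere. -/
theorem koplienko_ssf_nonneg_finiteDim {n : ℕ} (A B : Matrix (Fin n) (Fin n) ℂ)
    (hA : A.IsHermitian) (hB : B.IsHermitian)
    (X : Matrix (Fin n) (Fin n) ℂ) (hX : X = A - B)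
    (ψ : Fin n → (Fin n → ℂ)) (b : Fin n → ℝ)
    (hortho : ∀ k l, star (ψ k) ⬝ᵥ ψ l = if k = l then (1 : ℂ) else 0)
    (heig : ∀ k, B *ᵥ ψ k = (b k : ℂ) • ψ k)
    (η : ℝ → ℝ)
    (hη : ∀ x : ℝ,
      η x = (∑ k ∈ Finset.univ.filter fun k => b k < x, (star (ψ k) ⬝ᵥ (X *ᵥ ψ k)).re)
          - ∑ j, (max (x - b j) 0 - max (x - hA.eigenvalues j) 0)) :
    ∀ᵐ x : ℝ ∂volume, 0 ≤ η x := by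
  classical
  let ψE : Fin n → EuclideanSpace ℂ (Fin n) := fun k => (WithLp.equiv 2 (Fin n → ℂ)).symm (ψ k)
  have hψinner : ∀ k l, (inner ℂ (ψE k) (ψE l) : ℂ) = if k = l then 1 else 0 := fun k l => by
    exact (EuclideanSpace.inner_eq_star_dotProduct _ _).trans ((dotProduct_comm _ _).trans (hortho k l))
  have honn : Orthonormal ℂ ψE := orthonormal_iff_ite.2 hψinner
  let ψB : OrthonormalBasis (Fin n) ℂ (EuclideanSpace ℂ (Fin n)) :=
    OrthonormalBasis.mk honn
      (ge_of_eq (honn.linearIndependent.span_eq_top_of_card_eq_finrank' (by simp)))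
  have hψB : ⇑ψB = ψE := OrthonormalBasis.coe_mk _ _
  set φ := hA.eigenvectorBasis with hφ
  set a : Fin n → ℝ := hA.eigenvalues with ha
  have hip : ∀ u v : EuclideanSpace ℂ (Fin n), (inner ℂ u v : ℂ) = star (⇑u : Fin n → ℂ) ⬝ᵥ ⇑v :=
    fun u v => (EuclideanSpace.inner_eq_star_dotProduct u v).trans (dotProduct_comm _ _)
  have hAφ : ∀ j, A *ᵥ ⇑(φ j) = (a j) • ⇑(φ j) := hA.mulVec_eigenvectorBasis
  set c : Fin n → Fin n → ℝ := fun j k => ‖(inner ℂ (φ j) (ψE k) : ℂ)‖ ^ 2 with hc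
  have hc0 : ∀ j k, 0 ≤ c j k := fun j k => by positivity
  -- F1 : column sums are 1
  have F1 : ∀ k, ∑ j, c j k = 1 := by
    intro k
    have h := φ.sum_inner_mul_inner (ψE k) (ψE k)
    rw [hψinner k k, if_pos rfl] at h
    have h2 : ∑ j, ((c j k : ℝ) : ℂ) = 1 := by
      rw [← h]
      refine Finset.sum_congr rfl fun j _ => ?_
      rw [← inner_conj_symm (ψE k) (φ j), RCLike.conj_mul]
      norm_cast
    exact_mod_cast h2
  -- F2 : row sums are 1
  have F2 : ∀ j, ∑ k, c j k = 1 := by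
    intro j
    have h := ψB.sum_inner_mul_inner (φ j) (φ j)
    rw [orthonormal_iff_ite.mp φ.orthonormal j j, if_pos rfl] at h
    have h2 : ∑ k, ((c j k : ℝ) : ℂ) = 1 := by
      rw [← h]
      refine Finset.sum_congr rfl fun k _ => ?_
      rw [hψB, ← inner_conj_symm (φ j) (ψE k), RCLike.conj_mul]
      rw [norm_inner_symm (ψE k) (φ j)]
      norm_cast
    exact_mod_cast h2
  -- F3 : ⟨ψ_k, A ψ_k⟩
  have F3 : ∀ k, star (ψ k) ⬝ᵥ (A *ᵥ ψ k) = ∑ j, ((a j : ℂ) * (c j k : ℂ)) := by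
    intro k
    set yk : EuclideanSpace ℂ (Fin n) := (WithLp.equiv 2 (Fin n → ℂ)).symm (A *ᵥ ψ k) with hyk
    have key : ∀ j, (inner ℂ (φ j) yk : ℂ) = (a j : ℂ) * inner ℂ (φ j) (ψE k) := by
      intro j
      calc (inner ℂ (φ j) yk : ℂ) = star (⇑(φ j) : Fin n → ℂ) ⬝ᵥ (A *ᵥ ψ k) := hip _ _
        _ = (star (⇑(φ j) : Fin n → ℂ) ᵥ* A) ⬝ᵥ ψ k := dotProduct_mulVec _ _ _
        _ = (star (⇑(φ j) : Fin n → ℂ) ᵥ* Aᴴ) ⬝ᵥ ψ k := by rw [hA.eq]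
        _ = star (A *ᵥ (⇑(φ j) : Fin n → ℂ)) ⬝ᵥ ψ k := by rw [star_mulVec]
        _ = star ((a j) • (⇑(φ j) : Fin n → ℂ)) ⬝ᵥ ψ k := by rw [hAφ j]
        _ = (a j : ℂ) * (star (⇑(φ j) : Fin n → ℂ) ⬝ᵥ ψ k) := by
            rw [star_smul, star_trivial, smul_dotProduct]
            simp [Complex.real_smul]
        _ = (a j : ℂ) * inner ℂ (φ j) (ψE k) := congrArg _ (hip _ _).symm
    have h := φ.sum_inner_mul_inner (ψE k) yk
    have hL : star (ψ k) ⬝ᵥ (A *ᵥ ψ k) = inner ℂ (ψE k) yk := (hip (ψE k) yk).symm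
    rw [hL, ← h]
    refine Finset.sum_congr rfl fun j _ => ?_
    rw [key j, ← inner_conj_symm (ψE k) (φ j)]
    rw [show (starRingEnd ℂ) (inner ℂ (φ j) (ψE k)) * ((a j : ℂ) * inner ℂ (φ j) (ψE k))
        = (a j : ℂ) * ((starRingEnd ℂ) (inner ℂ (φ j) (ψE k)) * inner ℂ (φ j) (ψE k)) by ring,
      RCLike.conj_mul]
    simp only [hc]
    push_cast
    norm_num [RCLike.ofReal_alg]
  -- F4 : the diagonal matrix elements of X in the eigenbasis of B
  have F4 : ∀ k, (star (ψ k) ⬝ᵥ (X *ᵥ ψ k)).re = (∑ j, a j * c j k) - b k := by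
    intro k
    rw [hX, sub_mulVec, dotProduct_sub, F3 k]
    have hBk : star (ψ k) ⬝ᵥ (B *ᵥ ψ k) = (b k : ℂ) := by
      rw [heig k, dotProduct_smul, hortho k k, if_pos rfl, smul_eq_mul, mul_one]
    rw [hBk]
    have : (∑ j, ((a j : ℂ) * (c j k : ℂ))) - ((b k : ℝ) : ℂ)
        = (((∑ j, a j * c j k) - b k : ℝ) : ℂ) := by push_cast; ring
    rw [this, Complex.ofReal_re]
  -- now the real-variable argument, valid for every x
  have key : ∀ x : ℝ, 0 ≤ η x := by
    intro x
    set S := Finset.univ.filter (fun k => b k < x) with hS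
    -- ∑ⱼ (x − bⱼ)₊ = ∑_{k∈S} (x − b_k)
    have stepA : ∑ j, max (x - b j) 0 = ∑ k ∈ S, (x - b k) := by
      rw [← Finset.sum_filter_of_ne (p := fun k => b k < x)
        (fun j _ hj => by
          by_contra hbj
          push_neg at hbj
          exact hj (max_eq_right (by linarith)))]
      exact Finset.sum_congr rfl fun j hj => by
        have := (Finset.mem_filter.mp hj).2
        exact max_eq_left (by linarith)
    have hck : ∀ k, (∑ j, a j * c j k) - x = ∑ j, c j k * (a j - x) := by
      intro k
      calc (∑ j, a j * c j k) - x = (∑ j, a j * c j k) - (∑ j, c j k) * x := by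
            rw [F1 k, one_mul]
        _ = ∑ j, (a j * c j k - c j k * x) := by
            rw [Finset.sum_mul, ← Finset.sum_sub_distrib]
        _ = ∑ j, c j k * (a j - x) := Finset.sum_congr rfl fun j _ => by ring
    have hη2 : η x = ∑ j, ((∑ k ∈ S, c j k) * (a j - x) + max (x - a j) 0) := by
      rw [hη x, ← hS]
      have h1 : ∑ k ∈ S, (star (ψ k) ⬝ᵥ (X *ᵥ ψ k)).re
          = ∑ k ∈ S, ((∑ j, a j * c j k) - b k) := Finset.sum_congr rfl fun k _ => F4 k
      have e1 : ∑ j, (max (x - b j) 0 - max (x - a j) 0)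
          = ∑ k ∈ S, (x - b k) - ∑ j, max (x - a j) 0 := by
        rw [Finset.sum_sub_distrib, stepA]
      have h3 : ∑ k ∈ S, ((∑ j, a j * c j k) - x)
          = ∑ j, (∑ k ∈ S, c j k) * (a j - x) := by
        rw [Finset.sum_congr rfl fun k _ => hck k, Finset.sum_comm]
        exact Finset.sum_congr rfl fun j _ => (Finset.sum_mul _ _ _).symm
      have h4 : ∑ k ∈ S, ((∑ j, a j * c j k) - b k) - ∑ k ∈ S, (x - b k)
          = ∑ k ∈ S, ((∑ j, a j * c j k) - x) := by
        rw [← Finset.sum_sub_distrib]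
        exact Finset.sum_congr rfl fun k _ => by ring
      rw [h1, e1, Finset.sum_add_distrib, ← h3, ← h4]
      ring
    rw [hη2]
    refine Finset.sum_nonneg fun j _ => ?_
    have hs0 : 0 ≤ ∑ k ∈ S, c j k := Finset.sum_nonneg fun k _ => hc0 j k
    have hs1 : ∑ k ∈ S, c j k ≤ 1 := by
      rw [← F2 j]
      exact Finset.sum_le_sum_of_subset_of_nonneg (Finset.subset_univ S)
        (fun k _ _ => hc0 j k)
    nlinarith [le_max_left (x - a j) 0, le_max_right (x - a j) 0]
  filter_upwards with x using key x
end

section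
/- (Total mass of the Koplienko spectral shift function, finite-dimensional case.) Let A, B be n×n Hermitian complex matrices, X = A − B, let (ψ_k)_{k=1}^n be an orthonormal basis of ℂⁿ with Bψ_k = b_k ψ_k (b_k ∈ ℝ), and let a_1,…,a_n be the eigenvalues of A counted with multiplicity. Define η : ℝ → ℝ by η(λ) = ∑_{k : b_k < λ} ⟨ψ_k, Xψ_k⟩ − ∑_{j=1}^n [ (λ − b_j)₊ − (λ − a_j)₊ ]. Then ∫_ℝ η(λ) dλ = (1/2) · Tr(X²) = (1/2) · ‖A − B‖_F², and consequently ∫_ℝ |η(λ)| dλ = (1/2) · ‖A − B‖_F². -/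
open Matrix MeasureTheory


noncomputable def kssfPhi (a b x : ℝ) : ℝ :=
  (if b < x then a - b else 0) - max (x - b) 0 + max (x - a) 0

lemma kssfPhi_eq (a b : ℝ) : kssfPhi a b =
    Set.indicator (Set.Ioc (min a b) (max a b)) (fun t => |t - a|) := by
  funext x
  simp only [kssfPhi, Set.indicator_apply, Set.mem_Ioc, le_max_iff, min_lt_iff]
  rcases le_or_gt x a with h1 | h1 <;> rcases le_or_gt x b with h2 | h2
  · rw [if_neg (not_lt.2 h2), max_eq_right (by linarith), max_eq_right (by linarith)]
    split_ifs with h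
    · rcases h.1 with h' | h' <;> linarith
    · ring
  · rw [if_pos h2, max_eq_left (by linarith), max_eq_right (by linarith),
      if_pos ⟨Or.inr h2, Or.inl h1⟩, abs_of_nonpos (by linarith)]
    ring
  · rw [if_neg (not_lt.2 h2), max_eq_right (by linarith), max_eq_left (by linarith),
      if_pos ⟨Or.inl h1, Or.inr h2⟩, abs_of_nonneg (by linarith)]
    ring
  · rw [if_pos h2, max_eq_left (by linarith), max_eq_left (by linarith)]
    split_ifs with h
    · rcases h.2 with h' | h' <;> linarith
    · ring

lemma kssfPhi_nonneg (a b x : ℝ) : 0 ≤ kssfPhi a b x := by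
  rw [kssfPhi_eq]
  exact Set.indicator_nonneg (fun t _ => abs_nonneg _) x

lemma kssfPhi_integrable (a b : ℝ) : Integrable (kssfPhi a b) := by
  rw [kssfPhi_eq]
  exact (integrable_indicator_iff measurableSet_Ioc).2
    (((continuous_id.sub continuous_const).abs).integrableOn_Ioc)

lemma kssfPhi_integral (a b : ℝ) : ∫ x, kssfPhi a b x = (a - b) ^ 2 / 2 := by
  rw [kssfPhi_eq, MeasureTheory.integral_indicator measurableSet_Ioc]
  rcases le_total a b with h | h
  · rw [min_eq_left h, max_eq_right h, ← intervalIntegral.integral_of_le h]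
    have : ∀ x ∈ Set.uIcc a b, |x - a| = x - a := by
      intro x hx
      rw [Set.uIcc_of_le h] at hx
      exact abs_of_nonneg (by linarith [hx.1])
    rw [intervalIntegral.integral_congr this,
      intervalIntegral.integral_sub intervalIntegral.intervalIntegrable_id
        (intervalIntegrable_const (c := a)), integral_id,
      intervalIntegral.integral_const, smul_eq_mul]
    ring
  · rw [min_eq_right h, max_eq_left h, ← intervalIntegral.integral_of_le h]
    have : ∀ x ∈ Set.uIcc b a, |x - a| = a - x := by
      intro x hx
      rw [Set.uIcc_of_le h] at hx
      rw [abs_of_nonpos (by linarith [hx.2])]; ring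
    rw [intervalIntegral.integral_congr this,
      intervalIntegral.integral_sub (intervalIntegrable_const (c := a))
        intervalIntegral.intervalIntegrable_id, integral_id,
      intervalIntegral.integral_const, smul_eq_mul]
    ring

lemma kssfPhi_apply (a b x : ℝ) : kssfPhi a b x =
    (if b < x then a - b else 0) - max (x - b) 0 + max (x - a) 0 := rfl

lemma kssf_quad {n : ℕ} (U : Matrix (Fin n) (Fin n) ℂ) (d : Fin n → ℂ) (v : Fin n → ℂ) :
    star v ⬝ᵥ ((U * Matrix.diagonal d * Uᴴ) *ᵥ v) =
      ∑ m, d m * (Complex.normSq ((Uᴴ *ᵥ v) m) : ℂ) := by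
  rw [← Matrix.mulVec_mulVec, ← Matrix.mulVec_mulVec, Matrix.dotProduct_mulVec]
  have h : star v ᵥ* U = star (Uᴴ *ᵥ v) := by
    rw [Matrix.star_mulVec, Matrix.conjTranspose_conjTranspose]
  rw [h]
  set w := Uᴴ *ᵥ v with hw
  simp only [Matrix.mulVec_diagonal, dotProduct, Pi.star_apply, RCLike.star_def]
  refine Finset.sum_congr rfl fun m _ => ?_
  rw [Complex.normSq_eq_conj_mul_self]
  ring

lemma kssf_trace {n : ℕ} (ψ : Fin n → (Fin n → ℂ))
    (hortho : ∀ k l, star (ψ k) ⬝ᵥ ψ l = if k = l then (1 : ℂ) else 0)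
    (M : Matrix (Fin n) (Fin n) ℂ) :
    Matrix.trace M = ∑ k, star (ψ k) ⬝ᵥ (M *ᵥ ψ k) := by
  set Ψ : Matrix (Fin n) (Fin n) ℂ := Matrix.of fun i k => ψ k i with hΨdef
  have hΨ : Ψᴴ * Ψ = 1 := by
    ext k l
    simpa [Matrix.mul_apply, Matrix.conjTranspose_apply, dotProduct, Matrix.one_apply,
      hΨdef] using hortho k l
  have hΨ' : Ψ * Ψᴴ = 1 := mul_eq_one_comm.mp hΨ
  calc Matrix.trace M = Matrix.trace (M * (Ψ * Ψᴴ)) := by rw [hΨ', mul_one]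
    _ = Matrix.trace (Ψᴴ * (M * Ψ)) := by
        rw [← mul_assoc, Matrix.trace_mul_comm (M * Ψ) Ψᴴ]
    _ = ∑ k, star (ψ k) ⬝ᵥ (M *ᵥ ψ k) := by
        simp only [Matrix.trace, Matrix.diag, Matrix.mul_apply, Matrix.conjTranspose_apply,
          dotProduct, Matrix.mulVec, hΨdef, Matrix.of_apply, Pi.star_apply, RCLike.star_def]

/-- **Total mass of the Koplienko spectral shift function, finite-dimensional
case.** With `X = A − B`, `(ψ_k)` an orthonormal eigenbasis of `B` with eigenvalues
`b_k`, and `a_j` the eigenvalues of `A`, the Koplienko spectral shift function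
`η(λ) = ∑_{k : b_k < λ} ⟨ψ_k, Xψ_k⟩ − ∑_j [(λ−b_j)₊ − (λ−a_j)₊]` satisfies
`∫ η = ½·Tr(X²) = ½·‖A−B‖_F²` and `∫ |η| = ½·‖A−B‖_F²`. -/
theorem koplienko_ssf_total_mass_finiteDim {n : ℕ} (A B : Matrix (Fin n) (Fin n) ℂ)
    (hA : A.IsHermitian) (hB : B.IsHermitian)
    (X : Matrix (Fin n) (Fin n) ℂ) (hX : X = A - B)
    (ψ : Fin n → (Fin n → ℂ)) (b : Fin n → ℝ)
    (hortho : ∀ k l, star (ψ k) ⬝ᵥ ψ l = if k = l then (1 : ℂ) else 0)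
    (heig : ∀ k, B *ᵥ ψ k = (b k : ℂ) • ψ k)
    (η : ℝ → ℝ)
    (hη : ∀ x : ℝ,
      η x = (∑ k ∈ Finset.univ.filter fun k => b k < x, (star (ψ k) ⬝ᵥ (X *ᵥ ψ k)).re)
          - ∑ j, (max (x - b j) 0 - max (x - hA.eigenvalues j) 0)) :
    (((∫ x : ℝ, η x) : ℂ) = (1 / 2) * Matrix.trace (X * X)) ∧
    ((∫ x : ℝ, η x) = (1 / 2) * ∑ i, ∑ j, ‖(A - B) i j‖ ^ 2) ∧
    ((∫ x : ℝ, |η x|) = (1 / 2) * ∑ i, ∑ j, ‖(A - B) i j‖ ^ 2) := by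
  set a : Fin n → ℝ := hA.eigenvalues with ha
  set U : Matrix (Fin n) (Fin n) ℂ := (hA.eigenvectorUnitary : Matrix (Fin n) (Fin n) ℂ) with hU
  have hU1 : U * Uᴴ = 1 := by
    simpa [Matrix.star_eq_conjTranspose] using
      Matrix.mem_unitaryGroup_iff.mp (hA.eigenvectorUnitary).2
  have hU2 : Uᴴ * U = 1 := by
    simpa [Matrix.star_eq_conjTranspose] using
      Matrix.mem_unitaryGroup_iff'.mp (hA.eigenvectorUnitary).2
  have hAeq : A = U * Matrix.diagonal (fun j => ((a j : ℝ) : ℂ)) * Uᴴ := hA.spectral_theorem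
  -- the doubly-stochastic transition matrix
  set P : Fin n → Fin n → ℝ := fun j k => Complex.normSq ((Uᴴ *ᵥ ψ k) j) with hP
  have hortho' : ∀ k, star (ψ k) ⬝ᵥ ψ k = 1 := by
    intro k; rw [hortho k k, if_pos rfl]
  -- column sums of P are 1
  have hPcol : ∀ k, ∑ j, P j k = 1 := by
    intro k
    have h := kssf_quad U (fun _ => (1 : ℂ)) (ψ k)
    rw [Matrix.diagonal_one, mul_one, hU1, Matrix.one_mulVec, hortho' k] at h
    simp only [one_mul] at h
    have h2 : ((∑ j, P j k : ℝ) : ℂ) = 1 := by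
      push_cast
      exact h.symm
    exact_mod_cast h2
  -- row sums of P are 1
  have hProw : ∀ j, ∑ k, P j k = 1 := by
    intro j
    set Ψ : Matrix (Fin n) (Fin n) ℂ := Matrix.of fun i k => ψ k i with hΨdef
    have hΨ : Ψᴴ * Ψ = 1 := by
      ext k l
      simpa [Matrix.mul_apply, Matrix.conjTranspose_apply, dotProduct, Matrix.one_apply,
        hΨdef] using hortho k l
    have hΨ' : Ψ * Ψᴴ = 1 := mul_eq_one_comm.mp hΨ
    have hWW : (Uᴴ * Ψ) * (Uᴴ * Ψ)ᴴ = 1 := by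
      rw [Matrix.conjTranspose_mul, Matrix.conjTranspose_conjTranspose, mul_assoc,
        ← mul_assoc Ψ, hΨ', one_mul, hU2]
    have h := congrFun (congrFun hWW j) j
    have hWe : ∀ k, (Uᴴ * Ψ) j k = (Uᴴ *ᵥ ψ k) j := by
      intro k; simp [Matrix.mul_apply, Matrix.mulVec, dotProduct, hΨdef]
    have h2 : ((∑ k, P j k : ℝ) : ℂ) = 1 := by
      push_cast
      calc (∑ k, (Complex.normSq ((Uᴴ *ᵥ ψ k) j) : ℂ))
          = ∑ k, (Uᴴ * Ψ) j k * (starRingEnd ℂ) ((Uᴴ * Ψ) j k) := by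
            refine Finset.sum_congr rfl fun k _ => ?_
            rw [hWe k, Complex.mul_conj]
        _ = ((Uᴴ * Ψ) * (Uᴴ * Ψ)ᴴ) j j := by
            simp [Matrix.mul_apply, Matrix.conjTranspose_apply, RCLike.star_def, mul_comm]
        _ = 1 := by rw [hWW]; simp [Matrix.one_apply]
    exact_mod_cast h2
  -- quadratic forms
  have hAq : ∀ k, star (ψ k) ⬝ᵥ (A *ᵥ ψ k) = ((∑ j, P j k * a j : ℝ) : ℂ) := by
    intro k
    rw [hAeq, kssf_quad]
    push_cast
    exact Finset.sum_congr rfl fun j _ => by rw [mul_comm]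
  have hBq : ∀ k, star (ψ k) ⬝ᵥ (B *ᵥ ψ k) = ((b k : ℝ) : ℂ) := by
    intro k
    rw [heig k, dotProduct_smul, hortho' k, smul_eq_mul, mul_one]
  have hXq : ∀ k, (star (ψ k) ⬝ᵥ (X *ᵥ ψ k)).re = ∑ j, P j k * (a j - b k) := by
    intro k
    rw [hX, Matrix.sub_mulVec, dotProduct_sub, hAq, hBq]
    have heq : (∑ j, P j k * (a j - b k)) = (∑ j, P j k * a j) - b k := by
      simp only [mul_sub, Finset.sum_sub_distrib]
      congr 1
      rw [← Finset.sum_mul, hPcol k, one_mul]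
    rw [heq]
    simp
  -- trace identities
  have htr := kssf_trace ψ hortho
  have htrUDU : ∀ d : Fin n → ℂ, Matrix.trace (U * Matrix.diagonal d * Uᴴ) = ∑ j, d j := by
    intro d
    rw [Matrix.trace_mul_comm (U * Matrix.diagonal d) Uᴴ, ← mul_assoc, hU2, one_mul,
      Matrix.trace_diagonal]
  have hAA : A * A = U * Matrix.diagonal (fun j => ((a j : ℂ)) * ((a j : ℂ))) * Uᴴ := by
    rw [hAeq]
    have hmid : Uᴴ * ((U * Matrix.diagonal (fun j => ((a j : ℂ)))) * Uᴴ)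
        = Matrix.diagonal (fun j => ((a j : ℂ))) * Uᴴ := by
      rw [← mul_assoc, ← mul_assoc, hU2, one_mul]
    calc (U * Matrix.diagonal (fun j => ((a j : ℂ))) * Uᴴ)
          * (U * Matrix.diagonal (fun j => ((a j : ℂ))) * Uᴴ)
        = U * Matrix.diagonal (fun j => ((a j : ℂ)))
            * (Uᴴ * (U * Matrix.diagonal (fun j => ((a j : ℂ))) * Uᴴ)) := by
          simp only [mul_assoc]
      _ = U * (Matrix.diagonal (fun j => ((a j : ℂ)))
            * Matrix.diagonal (fun j => ((a j : ℂ)))) * Uᴴ := by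
          rw [hmid, ← mul_assoc, ← mul_assoc, mul_assoc U]
      _ = U * Matrix.diagonal (fun j => ((a j : ℂ)) * ((a j : ℂ))) * Uᴴ := by
          rw [Matrix.diagonal_mul_diagonal]
  have htrA2 : Matrix.trace (A * A) = ∑ j, (a j : ℂ) * (a j : ℂ) := by
    rw [hAA, htrUDU]
  have htrB2 : Matrix.trace (B * B) = ∑ k, (b k : ℂ) * (b k : ℂ) := by
    rw [htr (B * B)]
    refine Finset.sum_congr rfl fun k _ => ?_
    rw [← Matrix.mulVec_mulVec, heig k, Matrix.mulVec_smul, heig k, dotProduct_smul,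
      dotProduct_smul, hortho' k]
    simp [smul_eq_mul]
  have htrAB : Matrix.trace (A * B) = ∑ k, (b k : ℂ) * ((∑ j, P j k * a j : ℝ) : ℂ) := by
    rw [htr (A * B)]
    refine Finset.sum_congr rfl fun k _ => ?_
    rw [← Matrix.mulVec_mulVec, heig k, Matrix.mulVec_smul, dotProduct_smul, hAq k, smul_eq_mul]
  have hQrow : ∀ j, (∑ k, ((P j k : ℝ) : ℂ)) = 1 := by
    intro j
    have := hProw j
    exact_mod_cast congrArg (Complex.ofReal) this
  have hQcol : ∀ k, (∑ j, ((P j k : ℝ) : ℂ)) = 1 := by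
    intro k
    exact_mod_cast congrArg (Complex.ofReal) (hPcol k)
  have hTrX : Matrix.trace (X * X) = ∑ j, ∑ k, ((P j k : ℝ) : ℂ) * ((a j : ℂ) - (b k : ℂ))^2 := by
    have e1 : (∑ j, ∑ k, ((P j k : ℝ) : ℂ) * ((a j : ℂ) - (b k : ℂ))^2)
        = (∑ j, ∑ k, ((P j k : ℝ) : ℂ) * (a j : ℂ) * (a j : ℂ))
        + (∑ j, ∑ k, ((P j k : ℝ) : ℂ) * (b k : ℂ) * (b k : ℂ))
        - 2 * ∑ j, ∑ k, (b k : ℂ) * (((P j k : ℝ) : ℂ) * (a j : ℂ)) := by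
      simp only [Finset.mul_sum, ← Finset.sum_add_distrib, ← Finset.sum_sub_distrib]
      refine Finset.sum_congr rfl fun j _ => Finset.sum_congr rfl fun k _ => by ring
    have p1 : (∑ j, ∑ k, ((P j k : ℝ) : ℂ) * (a j : ℂ) * (a j : ℂ))
        = ∑ j, (a j : ℂ) * (a j : ℂ) := by
      refine Finset.sum_congr rfl fun j _ => ?_
      rw [show (∑ k, ((P j k : ℝ) : ℂ) * (a j : ℂ) * (a j : ℂ))
          = (∑ k, ((P j k : ℝ) : ℂ)) * ((a j : ℂ) * (a j : ℂ)) by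
        rw [Finset.sum_mul]; exact Finset.sum_congr rfl fun k _ => by ring]
      rw [hQrow j, one_mul]
    have p2 : (∑ j, ∑ k, ((P j k : ℝ) : ℂ) * (b k : ℂ) * (b k : ℂ))
        = ∑ k, (b k : ℂ) * (b k : ℂ) := by
      rw [Finset.sum_comm]
      refine Finset.sum_congr rfl fun k _ => ?_
      rw [show (∑ j, ((P j k : ℝ) : ℂ) * (b k : ℂ) * (b k : ℂ))
          = (∑ j, ((P j k : ℝ) : ℂ)) * ((b k : ℂ) * (b k : ℂ)) by
        rw [Finset.sum_mul]; exact Finset.sum_congr rfl fun j _ => by ring]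
      rw [hQcol k, one_mul]
    have p3 : (∑ j, ∑ k, (b k : ℂ) * (((P j k : ℝ) : ℂ) * (a j : ℂ)))
        = ∑ k, (b k : ℂ) * ((∑ j, P j k * a j : ℝ) : ℂ) := by
      rw [Finset.sum_comm]
      refine Finset.sum_congr rfl fun k _ => ?_
      rw [← Finset.mul_sum]
      congr 1
      push_cast
      rfl
    rw [hX, sub_mul, mul_sub, mul_sub, Matrix.trace_sub, Matrix.trace_sub, Matrix.trace_sub,
      Matrix.trace_mul_comm B A, htrA2, htrB2, htrAB, e1, p1, p2, p3]
    ring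
  set F : ℝ := ∑ i, ∑ j, ‖(A - B) i j‖ ^ 2 with hF
  have hXherm : X.IsHermitian := by rw [hX]; exact hA.sub hB
  have hFrob : Matrix.trace (X * X) = ((F : ℝ) : ℂ) := by
    rw [hF, ← hX]
    push_cast
    simp only [Matrix.trace, Matrix.diag, Matrix.mul_apply]
    refine Finset.sum_congr rfl fun i _ => Finset.sum_congr rfl fun j _ => ?_
    have hc : X j i = (starRingEnd ℂ) (X i j) := by
      conv_lhs => rw [← hXherm]
      simp [Matrix.conjTranspose_apply]
    rw [hc, Complex.mul_conj]
    norm_cast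
    rw [Complex.normSq_eq_norm_sq]
  -- pointwise formula for η
  have hηeq : ∀ x, η x = ∑ j, ∑ k, P j k * kssfPhi (a j) (b k) x := by
    intro x
    rw [hη x]
    have hT1 : (∑ k ∈ Finset.univ.filter fun k => b k < x, (star (ψ k) ⬝ᵥ (X *ᵥ ψ k)).re)
        = ∑ k, ∑ j, P j k * (if b k < x then a j - b k else 0) := by
      rw [Finset.sum_filter]
      refine Finset.sum_congr rfl fun k _ => ?_
      split_ifs with h
      · rw [hXq k]
      · simp
    have hb2 : (∑ j, ∑ k, P j k * max (x - b k) 0) = ∑ j, max (x - b j) 0 := by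
      rw [Finset.sum_comm]
      refine Finset.sum_congr rfl fun k _ => ?_
      rw [← Finset.sum_mul, hPcol k, one_mul]
    have ha2 : (∑ j, ∑ k, P j k * max (x - a j) 0) = ∑ j, max (x - a j) 0 := by
      refine Finset.sum_congr rfl fun j _ => ?_
      rw [← Finset.sum_mul, hProw j, one_mul]
    calc (∑ k ∈ Finset.univ.filter fun k => b k < x, (star (ψ k) ⬝ᵥ (X *ᵥ ψ k)).re)
          - ∑ j, (max (x - b j) 0 - max (x - a j) 0)
        = (∑ k, ∑ j, P j k * (if b k < x then a j - b k else 0))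
          - ((∑ j, max (x - b j) 0) - (∑ j, max (x - a j) 0)) := by
          rw [hT1, Finset.sum_sub_distrib]
      _ = (∑ j, ∑ k, P j k * (if b k < x then a j - b k else 0))
          - ((∑ j, ∑ k, P j k * max (x - b k) 0) - (∑ j, ∑ k, P j k * max (x - a j) 0)) := by
          rw [Finset.sum_comm, hb2, ha2]
      _ = ∑ j, ∑ k, P j k * kssfPhi (a j) (b k) x := by
          simp only [kssfPhi_apply, mul_sub, mul_add, Finset.sum_add_distrib,
            Finset.sum_sub_distrib]
          ring
  -- nonnegativity of η
  have hpos : ∀ x, 0 ≤ η x := by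
    intro x
    rw [hηeq x]
    exact Finset.sum_nonneg fun j _ => Finset.sum_nonneg fun k _ =>
      mul_nonneg (Complex.normSq_nonneg _) (kssfPhi_nonneg _ _ _)
  -- the integral of η
  set S : ℝ := ∑ j, ∑ k, P j k * (a j - b k) ^ 2 with hSdef
  have hint1 : ∀ j k, Integrable (fun x => P j k * kssfPhi (a j) (b k) x) :=
    fun j k => (kssfPhi_integrable (a j) (b k)).const_mul _
  have hInt : (∫ x, η x) = (1 / 2) * S := by
    have h0 : (∫ x, η x) = ∫ x, ∑ j, ∑ k, P j k * kssfPhi (a j) (b k) x := by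
      simp only [hηeq]
    rw [h0, MeasureTheory.integral_finset_sum _
      (fun j _ => integrable_finset_sum _ (fun k _ => hint1 j k)), hSdef, Finset.mul_sum]
    refine Finset.sum_congr rfl fun j _ => ?_
    rw [MeasureTheory.integral_finset_sum _ (fun k _ => hint1 j k), Finset.mul_sum]
    refine Finset.sum_congr rfl fun k _ => ?_
    rw [MeasureTheory.integral_const_mul, kssfPhi_integral]
    ring
  -- casts
  have hSC : ((S : ℝ) : ℂ) = Matrix.trace (X * X) := by
    rw [hTrX, hSdef]
    push_cast
    rfl
  have hSF : S = F := by
    have : ((S : ℝ) : ℂ) = ((F : ℝ) : ℂ) := by rw [hSC, hFrob]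
    exact_mod_cast this
  refine ⟨?_, ?_, ?_⟩
  · have hcast : (∫ x : ℝ, ((η x : ℝ) : ℂ)) = ((∫ x : ℝ, η x : ℝ) : ℂ) :=
      integral_ofReal (𝕜 := ℂ)
    rw [hcast, hInt, ← hSC]
    push_cast
    ring
  · rw [hInt, hSF, hF]
  · have habs : (∫ x, |η x|) = ∫ x, η x :=
      MeasureTheory.integral_congr_ae
        (Filter.Eventually.of_forall fun x => abs_of_nonneg (hpos x))
    rw [habs, hInt, hSF, hF]
end

section
/- Every nonnegative Riemann integrable function of compact support is an L¹-limit of finite sums of the form ∑ |Iₙ|·χ_{Iₙ}: precisely, let η : ℝ → [0,∞) be bounded, vanishing outside a compact set, and continuous at Lebesgue-almost every point of ℝ. Then there exists a sequence of bounded open intervals (Iₙ)_{n∈ℕ} with ∑_{n=1}^∞ |Iₙ|² < ∞ such that for every N the partial sum ∑_{n=1}^N |Iₙ|·χ_{Iₙ}(λ) ≤ η(λ) for all λ ∈ ℝ, and ∫_ℝ | η(λ) − ∑_{n=1}^N |Iₙ|·χ_{Iₙ}(λ) | dλ → 0 as N → ∞. -/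
open MeasureTheory Set Filter

noncomputable section RiemannIntHelpers

/-- the basic term: |I|·χ_I -/
def rsiTerm (p : ℝ × ℝ) (x : ℝ) : ℝ :=
  (p.2 - p.1) * (Set.Ioo p.1 p.2).indicator (fun _ => (1 : ℝ)) x

/-- sum over a list of intervals -/
def rsiSL (L : List (ℝ × ℝ)) (x : ℝ) : ℝ := (L.map (fun p => rsiTerm p x)).sum

lemma rsiTerm_nonneg {p : ℝ × ℝ} (h : p.1 ≤ p.2) (x : ℝ) : 0 ≤ rsiTerm p x := by
  unfold rsiTerm
  apply mul_nonneg (by linarith)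
  apply Set.indicator_nonneg; intro y _; norm_num

lemma rsiTerm_le (p : ℝ × ℝ) (x : ℝ) : rsiTerm p x ≤ p.2 - p.1 ∨ rsiTerm p x = 0 := by
  unfold rsiTerm
  by_cases hx : x ∈ Set.Ioo p.1 p.2
  · left; rw [Set.indicator_of_mem hx]; simp
  · right; rw [Set.indicator_of_notMem hx]; simp

lemma rsiSL_nonneg {L : List (ℝ × ℝ)} (h : ∀ p ∈ L, p.1 ≤ p.2) (x : ℝ) : 0 ≤ rsiSL L x := by
  unfold rsiSL
  apply List.sum_nonneg
  intro a ha
  obtain ⟨p, hp, rfl⟩ := List.mem_map.1 ha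
  exact rsiTerm_nonneg (h p hp) x

lemma rsiSL_append (L₁ L₂ : List (ℝ × ℝ)) (x : ℝ) :
    rsiSL (L₁ ++ L₂) x = rsiSL L₁ x + rsiSL L₂ x := by
  unfold rsiSL; rw [List.map_append, List.sum_append]

lemma rsiTerm_measurable (p : ℝ × ℝ) : Measurable (rsiTerm p) := by
  unfold rsiTerm
  exact (measurable_const.indicator measurableSet_Ioo).const_mul _

lemma rsiSL_measurable (L : List (ℝ × ℝ)) : Measurable (rsiSL L) := by
  unfold rsiSL
  induction L with
  | nil => simpa using measurable_const
  | cons p t ih => simp only [List.map_cons, List.sum_cons]; exact (rsiTerm_measurable p).add ih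

lemma rsiTerm_integrable (p : ℝ × ℝ) : Integrable (rsiTerm p) := by
  unfold rsiTerm
  apply Integrable.const_mul
  rw [integrable_indicator_iff measurableSet_Ioo]
  exact integrableOn_const measure_Ioo_lt_top.ne

lemma rsiTerm_integral {p : ℝ × ℝ} (h : p.1 ≤ p.2) :
    ∫ x, rsiTerm p x = (p.2 - p.1) ^ 2 := by
  unfold rsiTerm
  rw [MeasureTheory.integral_const_mul, MeasureTheory.integral_indicator measurableSet_Ioo]
  simp [Real.volume_Ioo, ENNReal.toReal_ofReal (by linarith : (0:ℝ) ≤ p.2 - p.1), max_eq_left (by linarith : (0:ℝ) ≤ p.2 - p.1)]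
  ring

lemma rsiSL_integrable (L : List (ℝ × ℝ)) : Integrable (rsiSL L) := by
  unfold rsiSL
  induction L with
  | nil => simpa using integrable_zero _ _ _
  | cons p t ih => simp only [List.map_cons, List.sum_cons]; exact (rsiTerm_integrable p).add ih


lemma rsiTerm_continuousAt {p : ℝ × ℝ} {x : ℝ} (h1 : x ≠ p.1) (h2 : x ≠ p.2) :
    ContinuousAt (rsiTerm p) x := by
  unfold rsiTerm
  have hind : ContinuousAt ((Set.Ioo p.1 p.2).indicator (fun _ => (1 : ℝ))) x := by
    by_cases hx : x ∈ Set.Ioo p.1 p.2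
    · have hEq : (fun _ => (1:ℝ)) =ᶠ[nhds x] (Set.Ioo p.1 p.2).indicator (fun _ => (1:ℝ)) :=
        Filter.eventuallyEq_of_mem (isOpen_Ioo.mem_nhds hx)
          (fun y hy => by simp [Set.indicator_of_mem hy])
      exact continuousAt_const.congr hEq
    · have hx' : x ∈ (Set.Icc p.1 p.2)ᶜ := by
        intro hc
        rcases lt_or_ge p.1 p.2 with hlt | hle
        · rcases hc.1.lt_or_eq with h | h
          · rcases hc.2.lt_or_eq with h' | h'
            · exact hx ⟨h, h'⟩
            · exact h2 h'
          · exact h1 h.symm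
        · exact h1 (le_antisymm hc.1 (hc.2.trans hle)).symm
      have hop : IsOpen ((Set.Icc p.1 p.2)ᶜ) := isClosed_Icc.isOpen_compl
      have hEq : (fun _ => (0:ℝ)) =ᶠ[nhds x] (Set.Ioo p.1 p.2).indicator (fun _ => (1:ℝ)) :=
        Filter.eventuallyEq_of_mem (hop.mem_nhds hx') (fun y hy => by
          have : y ∉ Set.Ioo p.1 p.2 := fun hc => hy (Set.Ioo_subset_Icc_self hc)
          simp [Set.indicator_of_notMem this])
      exact continuousAt_const.congr hEq
  exact continuousAt_const.mul hind

lemma rsiSL_ae_continuousAt (L : List (ℝ × ℝ)) :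
    ∀ᵐ x : ℝ ∂volume, ContinuousAt (rsiSL L) x := by
  induction L with
  | nil =>
    filter_upwards with x
    unfold rsiSL; simpa using continuousAt_const
  | cons p t ih =>
    have h1 : ∀ᵐ x : ℝ ∂volume, x ≠ p.1 := by
      have : volume ({p.1} : Set ℝ) = 0 := measure_singleton _
      filter_upwards [measure_eq_zero_iff_ae_notMem.1 this] with x hx
      simpa using hx
    have h2 : ∀ᵐ x : ℝ ∂volume, x ≠ p.2 := by
      have : volume ({p.2} : Set ℝ) = 0 := measure_singleton _
      filter_upwards [measure_eq_zero_iff_ae_notMem.1 this] with x hx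
      simpa using hx
    filter_upwards [ih, h1, h2] with x hx hx1 hx2
    have : rsiSL (p :: t) = fun y => rsiTerm p y + rsiSL t y := by
      funext y; unfold rsiSL; simp
    rw [this]
    exact (rsiTerm_continuousAt hx1 hx2).add hx

lemma aesm_of_ae_continuousAt {f : ℝ → ℝ} (h : ∀ᵐ x : ℝ ∂volume, ContinuousAt f x) :
    AEStronglyMeasurable f volume := by
  set v := {x : ℝ | ContinuousAt f x} with hv
  have hvc : volume vᶜ = 0 := by
    have h2 := ae_iff.1 h
    have he : vᶜ = {x : ℝ | ¬ ContinuousAt f x} := by ext x; simp [hv]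
    rw [he]; exact h2
  have h1 : AEStronglyMeasurable f (volume.restrict v) :=
    (continuousOn_of_forall_continuousAt fun _ h ↦ h).aestronglyMeasurable
      (measurableSet_of_continuousAt f)
  have hmem : ∀ᵐ x : ℝ ∂volume, x ∈ v := by
    rw [ae_iff]
    have he : {x : ℝ | ¬ x ∈ v} = vᶜ := by ext x; simp
    rw [he]; exact hvc
  have : volume.restrict v = volume := Measure.restrict_eq_self_of_ae_mem hmem
  rwa [this] at h1

lemma list_sum_range_getD (L : List (ℝ × ℝ)) (g : ℝ × ℝ → ℝ) :
    ∑ m ∈ Finset.range L.length, g (L.getD m (0, 0)) = (L.map g).sum := by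
  induction L with
  | nil => simp
  | cons p t ih =>
    rw [List.length_cons, Finset.sum_range_succ']
    simp only [List.getD_cons_succ, List.getD_cons_zero, List.map_cons, List.sum_cons]
    rw [ih]; ring


lemma rsiSL_nil (x : ℝ) : rsiSL [] x = 0 := rfl

lemma rsiSL_cons (p : ℝ × ℝ) (t : List (ℝ × ℝ)) (x : ℝ) :
    rsiSL (p :: t) x = rsiTerm p x + rsiSL t x := by
  unfold rsiSL; simp

lemma rsiSL_replicate (k : ℕ) (p : ℝ × ℝ) (x : ℝ) :
    rsiSL (List.replicate k p) x = (k : ℝ) * rsiTerm p x := by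
  induction k with
  | zero => simp [rsiSL_nil]
  | succ k ih =>
    rw [List.replicate_succ, rsiSL_cons, ih]
    push_cast; ring

lemma rsiSL_flatMap_range (F : ℕ → List (ℝ × ℝ)) (n : ℕ) (x : ℝ) :
    rsiSL ((List.range n).flatMap F) x = ∑ i ∈ Finset.range n, rsiSL (F i) x := by
  induction n with
  | zero => simp [rsiSL_nil]
  | succ n ih =>
    rw [List.range_succ, List.flatMap_append, rsiSL_append, ih, Finset.sum_range_succ]
    simp [rsiSL_append, rsiSL_nil]


lemma rsi_stage (M R : ℝ) (hR : 0 < R) (hM : 0 ≤ M) (g : ℝ → ℝ)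
    (hg0 : ∀ x, 0 ≤ g x) (hgM : ∀ x, g x ≤ M)
    (hsupp : ∀ x ∉ Set.Icc (-R) R, g x = 0)
    (hcont : ∀ᵐ x : ℝ ∂volume, ContinuousAt g x)
    (ε : ℝ) (hε : 0 < ε) :
    ∃ L : List (ℝ × ℝ), (∀ p ∈ L, p.1 ≤ p.2) ∧ (∀ x, rsiSL L x ≤ g x) ∧
      ∫ x, (g x - rsiSL L x) < ε := by
  -- grid data
  set ℓ : ℕ → ℝ := fun n => 2 * R / n with hℓ
  set a : ℕ → ℕ → ℝ := fun n i => -R + i * ℓ n with ha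
  set m : ℕ → ℕ → ℝ := fun n i => sInf (g '' Set.Icc (a n i) (a n (i + 1))) with hm
  set k : ℕ → ℕ → ℕ := fun n i => ⌊m n i / ℓ n⌋₊ with hk
  set LL : ℕ → List (ℝ × ℝ) := fun n =>
    (List.range n).flatMap (fun i => List.replicate (k n i) (a n i, a n (i + 1))) with hLL
  have hℓ0 : ∀ n, 0 ≤ ℓ n := fun n => by
    simp only [hℓ]; positivity
  have hℓpos : ∀ n, 1 ≤ n → 0 < ℓ n := fun n hn => by
    simp only [hℓ]
    have : (0:ℝ) < n := by exact_mod_cast hn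
    positivity
  have hnl : ∀ n : ℕ, 1 ≤ n → (n : ℝ) * ℓ n = 2 * R := by
    intro n hn
    have : (n:ℝ) ≠ 0 := by positivity
    simp only [hℓ]; field_simp
  have hamono : ∀ n, ∀ i j : ℕ, i ≤ j → a n i ≤ a n j := by
    intro n i j hij
    simp only [ha]
    have : (i:ℝ) ≤ j := by exact_mod_cast hij
    nlinarith [hℓ0 n]
  have hadiff : ∀ n i, a n (i + 1) - a n i = ℓ n := by
    intro n i; simp only [ha]; push_cast; ring
  have haIcc : ∀ n i, Set.Nonempty (g '' Set.Icc (a n i) (a n (i + 1))) := by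
    intro n i
    exact (Set.nonempty_Icc.2 (hamono n i (i+1) (by omega))).image g
  have hbdd : ∀ n i, BddBelow (g '' Set.Icc (a n i) (a n (i + 1))) :=
    fun n i => ⟨0, fun y ⟨x, _, hx⟩ => hx ▸ hg0 x⟩
  have hm0 : ∀ n i, 0 ≤ m n i := fun n i =>
    le_csInf (haIcc n i) (fun y ⟨x, _, hx⟩ => hx ▸ hg0 x)
  have hmle : ∀ n i, ∀ x ∈ Set.Icc (a n i) (a n (i + 1)), m n i ≤ g x :=
    fun n i x hx => csInf_le (hbdd n i) ⟨x, hx, rfl⟩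
  have hkl : ∀ n i, (k n i : ℝ) * ℓ n ≤ m n i := by
    intro n i
    rcases Nat.eq_zero_or_pos n with h | h
    · have hz : ℓ n = 0 := by simp [hℓ, h]
      rw [hz, mul_zero]
      exact hm0 n i
    · have hl := hℓpos n h
      have h1 := Nat.floor_le (div_nonneg (hm0 n i) (hℓ0 n))
      calc (k n i : ℝ) * ℓ n ≤ (m n i / ℓ n) * ℓ n :=
            mul_le_mul_of_nonneg_right h1 (hℓ0 n)
        _ = m n i := by field_simp
  have hkl' : ∀ n i, 1 ≤ n → m n i < (k n i : ℝ) * ℓ n + ℓ n := by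
    intro n i hn
    have hl := hℓpos n hn
    have h1 := Nat.lt_floor_add_one (m n i / ℓ n)
    have h2 : m n i / ℓ n * ℓ n < ((k n i : ℝ) + 1) * ℓ n := by
      apply mul_lt_mul_of_pos_right _ hl
      exact_mod_cast h1
    rw [div_mul_cancel₀ _ (ne_of_gt hl)] at h2
    linarith
  -- the sum as a finite sum over cells
  have hsum : ∀ n x, rsiSL (LL n) x =
      ∑ i ∈ Finset.range n, (k n i : ℝ) * rsiTerm (a n i, a n (i + 1)) x := by
    intro n x
    simp only [hLL]
    rw [rsiSL_flatMap_range]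
    exact Finset.sum_congr rfl fun i _ => rsiSL_replicate _ _ _
  -- value on a single cell
  have hsingle : ∀ n i, i < n → ∀ x ∈ Set.Ioo (a n i) (a n (i + 1)),
      rsiSL (LL n) x = (k n i : ℝ) * ℓ n := by
    intro n i hi x hx
    rw [hsum]
    rw [Finset.sum_eq_single_of_mem i (Finset.mem_range.2 hi)]
    · unfold rsiTerm
      rw [Set.indicator_of_mem hx]
      simp [hadiff n i]
    · intro j _ hji
      have hxj : x ∉ Set.Ioo (a n j) (a n (j + 1)) := by
        rcases lt_or_gt_of_ne hji with h | h
        · intro hc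
          have : a n (j + 1) ≤ a n i := hamono n (j+1) i (by omega)
          exact absurd hc.2 (not_lt.2 (le_trans this (le_of_lt hx.1)))
        · intro hc
          have : a n (i + 1) ≤ a n j := hamono n (i+1) j (by omega)
          exact absurd hc.1 (not_lt.2 (le_trans (le_of_lt hx.2) this).ge.le)
      unfold rsiTerm
      rw [Set.indicator_of_notMem hxj]
      ring
  -- pointwise domination by g
  have hle : ∀ n x, rsiSL (LL n) x ≤ g x := by
    intro n x
    by_cases hex : ∃ i, i < n ∧ x ∈ Set.Ioo (a n i) (a n (i + 1))
    · obtain ⟨i, hi, hx⟩ := hex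
      rw [hsingle n i hi x hx]
      exact le_trans (hkl n i) (hmle n i x (Set.Ioo_subset_Icc_self hx))
    · rw [hsum]
      have : ∀ i ∈ Finset.range n, (k n i : ℝ) * rsiTerm (a n i, a n (i + 1)) x = 0 := by
        intro i hi
        have hxi : x ∉ Set.Ioo (a n i) (a n (i + 1)) :=
          fun hc => hex ⟨i, Finset.mem_range.1 hi, hc⟩
        unfold rsiTerm
        rw [Set.indicator_of_notMem hxi]
        ring
      rw [Finset.sum_congr rfl this]
      simp [hg0 x]
  -- entries of the list
  have hmem : ∀ n, ∀ p ∈ LL n, p.1 ≤ p.2 := by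
    intro n p hp
    simp only [hLL, List.mem_flatMap, List.mem_range] at hp
    obtain ⟨i, _, hpi⟩ := hp
    rw [List.eq_of_mem_replicate hpi]
    exact hamono n i (i+1) (by omega)
  -- g dominated by indicator bound
  set bound : ℝ → ℝ := (Set.Icc (-R) R).indicator (fun _ => M) with hbound
  have hgbd : ∀ x, g x ≤ bound x := by
    intro x
    by_cases hx : x ∈ Set.Icc (-R) R
    · rw [hbound, Set.indicator_of_mem hx]; exact hgM x
    · rw [hbound, Set.indicator_of_notMem hx, hsupp x hx]
  have hbound_int : Integrable bound := by
    rw [hbound, integrable_indicator_iff measurableSet_Icc]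
    exact integrableOn_const measure_Icc_lt_top.ne
  have hg_int : Integrable g := by
    apply hbound_int.mono' (aesm_of_ae_continuousAt hcont)
    filter_upwards with x
    rw [Real.norm_eq_abs, abs_of_nonneg (hg0 x)]
    exact hgbd x
  -- grid points form a null set
  set E : Set ℝ := Set.range (fun q : ℕ × ℕ => -R + q.2 * ℓ q.1) with hE
  have hEnull : volume E = 0 := (Set.countable_range _).measure_zero _
  have hEae : ∀ᵐ x : ℝ ∂volume, x ∉ E := by
    rw [ae_iff]
    simpa using hEnull
  -- pointwise convergence a.e.
  have hconv : ∀ᵐ x : ℝ ∂volume,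
      Tendsto (fun n => rsiSL (LL n) x) atTop (nhds (g x)) := by
    filter_upwards [hcont, hEae] with x hcx hxE
    by_cases hxI : x ∈ Set.Ioo (-R) R
    · -- interior point
      rw [Metric.tendsto_atTop]
      intro ε' hε'
      obtain ⟨δ, hδ0, hδ⟩ := Metric.continuousAt_iff.1 hcx (ε' / 2) (by linarith)
      set δ' : ℝ := min δ (ε' / 2) with hδ'
      have hδ'0 : 0 < δ' := lt_min hδ0 (by linarith)
      refine ⟨⌊2 * R / δ'⌋₊ + 1, fun n hn => ?_⟩
      have hn1 : 1 ≤ n := le_trans (by omega) hn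
      have hl := hℓpos n hn1
      have hℓδ : ℓ n < δ' := by
        have h1 : (2 * R / δ' : ℝ) < n := by
          calc (2 * R / δ' : ℝ) < ⌊2 * R / δ'⌋₊ + 1 := Nat.lt_floor_add_one _
            _ ≤ n := by exact_mod_cast hn
        rw [hℓ]
        rw [div_lt_iff₀ (by positivity : (0:ℝ) < (n:ℝ))]
        rw [div_lt_iff₀ hδ'0] at h1
        linarith
      -- locate the cell containing x
      set i : ℕ := ⌊(x + R) / ℓ n⌋₊ with hi
      have hxR0 : 0 < x + R := by linarith [hxI.1]
      have hiln : i < n := by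
        rw [hi, Nat.floor_lt (le_of_lt (div_pos hxR0 hl))]
        rw [div_lt_iff₀ hl]
        have := hnl n hn1
        nlinarith [hxI.2]
      have hax : a n i < x := by
        have h1 : (i : ℝ) * ℓ n ≤ x + R := by
          calc (i : ℝ) * ℓ n ≤ ((x + R) / ℓ n) * ℓ n :=
              mul_le_mul_of_nonneg_right (Nat.floor_le (le_of_lt (div_pos hxR0 hl))) (hℓ0 n)
            _ = x + R := by field_simp
        have hne : a n i ≠ x := fun hc => hxE ⟨(n, i), hc⟩
        have : a n i ≤ x := by simp only [ha]; linarith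
        exact lt_of_le_of_ne this hne
      have hax2 : x < a n (i + 1) := by
        have h1 : (x + R) / ℓ n < (i : ℝ) + 1 := Nat.lt_floor_add_one _
        have h2 : x + R < ((i : ℝ) + 1) * ℓ n := by
          rw [div_lt_iff₀ hl] at h1; linarith
        simp only [ha]; push_cast; linarith
      have hxcell : x ∈ Set.Ioo (a n i) (a n (i + 1)) := ⟨hax, hax2⟩
      rw [hsingle n i hiln x hxcell]
      -- estimates
      have hub : (k n i : ℝ) * ℓ n ≤ g x :=
        le_trans (hkl n i) (hmle n i x (Set.Ioo_subset_Icc_self hxcell))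
      have hmlb : g x - ε' / 2 ≤ m n i := by
        apply le_csInf (haIcc n i)
        rintro y ⟨z, hz, rfl⟩
        have hdz : dist z x < δ := by
          rw [Real.dist_eq, abs_lt]
          have h1 := hz.1
          have h2 := hz.2
          have h3 := hadiff n i
          have h4 : δ' ≤ δ := min_le_left _ _
          constructor <;> nlinarith [hxcell.1, hxcell.2]
        have := hδ hdz
        rw [Real.dist_eq, abs_lt] at this
        linarith [this.1]
      have hlb : g x - ε' < (k n i : ℝ) * ℓ n := by
        have h1 := hkl' n i hn1
        have h2 : δ' ≤ ε' / 2 := min_le_right _ _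
        linarith
      rw [Real.dist_eq, abs_lt]
      constructor <;> linarith
    · -- exterior point: everything is 0
      have hxicc : x ∉ Set.Icc (-R) R := by
        intro hc
        rcases hc.1.lt_or_eq with h1 | h1
        · rcases hc.2.lt_or_eq with h2 | h2
          · exact hxI ⟨h1, h2⟩
          · apply hxE
            refine ⟨(1, 1), ?_⟩
            simp only [hℓ]
            push_cast
            rw [h2]; ring
        · apply hxE
          refine ⟨(1, 0), ?_⟩
          simp only [hℓ]
          push_cast
          rw [← h1]; ring
      have hz : ∀ n, rsiSL (LL n) x = 0 := by
        intro n
        rw [hsum]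
        apply Finset.sum_eq_zero
        intro j hj
        have hjn := Finset.mem_range.1 hj
        have hxj : x ∉ Set.Ioo (a n j) (a n (j + 1)) := by
          intro hc
          apply hxicc
          constructor
          · have : a n 0 ≤ a n j := hamono n 0 j (by omega)
            have ha0 : a n 0 = -R := by simp [ha]
            linarith [hc.1]
          · have h1 : a n (j + 1) ≤ a n n := hamono n (j+1) n (by omega)
            have hann : a n n = R := by
              have hn1 : 1 ≤ n := by omega
              simp only [ha]
              have := hnl n hn1
              linarith
            linarith [hc.2]
        unfold rsiTerm
        rw [Set.indicator_of_notMem hxj]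
        ring
      have hgz : g x = 0 := hsupp x hxicc
      simp only [hz, hgz]
      exact tendsto_const_nhds
  -- dominated convergence
  have hDCT : Tendsto (fun n => ∫ x, rsiSL (LL n) x) atTop (nhds (∫ x, g x)) := by
    apply tendsto_integral_of_dominated_convergence bound
      (fun n => (rsiSL_measurable (LL n)).aestronglyMeasurable) hbound_int
    · intro n
      filter_upwards with x
      rw [Real.norm_eq_abs, abs_of_nonneg (rsiSL_nonneg (hmem n) x)]
      exact le_trans (hle n x) (hgbd x)
    · exact hconv
  have hdiff : Tendsto (fun n => ∫ x, (g x - rsiSL (LL n) x)) atTop (nhds 0) := by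
    have h1 : Tendsto (fun n => (∫ x, g x) - ∫ x, rsiSL (LL n) x) atTop
        (nhds ((∫ x, g x) - ∫ x, g x)) := tendsto_const_nhds.sub hDCT
    rw [sub_self] at h1
    apply h1.congr
    intro n
    rw [integral_sub hg_int (rsiSL_integrable (LL n))]
  rw [Metric.tendsto_atTop] at hdiff
  obtain ⟨N, hN⟩ := hdiff ε hε
  have := hN N le_rfl
  rw [Real.dist_eq, sub_zero] at this
  exact ⟨LL N, hmem N, hle N, lt_of_le_of_lt (le_abs_self _) this⟩


end RiemannIntHelpers

open MeasureTheory

/-- Every nonnegative Riemann integrable function of compact support (bounded,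
compactly supported, a.e. continuous) is an `L¹`-limit of finite sums
`∑ₙ |Iₙ|·χ_{Iₙ}` with `∑ₙ |Iₙ|² < ∞`, where each partial sum lies below `η`. -/
theorem riemann_integrable_sum_of_intervals (η : ℝ → ℝ) (hnonneg : ∀ x, 0 ≤ η x)
    (hbdd : ∃ M : ℝ, ∀ x, η x ≤ M)
    (hsupp : ∃ K : Set ℝ, IsCompact K ∧ ∀ x ∉ K, η x = 0)
    (hcont : ∀ᵐ x : ℝ ∂volume, ContinuousAt η x) :
    ∃ c d : ℕ → ℝ, (∀ m, c m ≤ d m) ∧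
      Summable (fun m => (d m - c m) ^ 2) ∧
      (∀ N : ℕ, ∀ x : ℝ,
        ∑ m ∈ Finset.range N,
          (d m - c m) * (Set.Ioo (c m) (d m)).indicator (fun _ => (1 : ℝ)) x ≤ η x) ∧
      Filter.Tendsto
        (fun N : ℕ => ∫ x : ℝ,
          |η x - ∑ m ∈ Finset.range N,
            (d m - c m) * (Set.Ioo (c m) (d m)).indicator (fun _ => (1 : ℝ)) x|)
        Filter.atTop (nhds 0) := by
  classical
  obtain ⟨M₀, hM₀⟩ := hbdd
  obtain ⟨K, hK, hKe⟩ := hsupp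
  set M : ℝ := max M₀ 0 with hM
  have hMb : ∀ x, η x ≤ M := fun x => le_trans (hM₀ x) (le_max_left _ _)
  have hM0 : (0:ℝ) ≤ M := le_max_right _ _
  obtain ⟨r, hr⟩ := hK.isBounded.subset_closedBall 0
  set R : ℝ := max r 1 with hR
  have hR0 : (0:ℝ) < R := lt_of_lt_of_le one_pos (le_max_right _ _)
  have hsuppR : ∀ x ∉ Set.Icc (-R) R, η x = 0 := by
    intro x hx
    apply hKe
    intro hxK
    apply hx
    have h1 := hr hxK
    rw [Real.closedBall_eq_Icc] at h1
    have hrR : r ≤ R := le_max_left _ _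
    constructor
    · have := h1.1; simp at this ⊢; linarith
    · have := h1.2; simp at this ⊢; linarith
  -- integrability of η
  have hη_int : Integrable η := by
    have hbound_int : Integrable ((Set.Icc (-R) R).indicator (fun _ => M)) := by
      rw [integrable_indicator_iff measurableSet_Icc]
      exact integrableOn_const measure_Icc_lt_top.ne
    apply hbound_int.mono' (aesm_of_ae_continuousAt hcont)
    filter_upwards with x
    rw [Real.norm_eq_abs, abs_of_nonneg (hnonneg x)]
    by_cases hx : x ∈ Set.Icc (-R) R
    · rw [Set.indicator_of_mem hx]; exact hMb x
    · rw [Set.indicator_of_notMem hx, hsuppR x hx]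
  -- invariant
  set Inv : ℕ → List (ℝ × ℝ) → Prop := fun k B =>
    (∀ p ∈ B, p.1 ≤ p.2) ∧ (∀ x, rsiSL B x ≤ η x) ∧ k ≤ B.length ∧
      (k = 0 ∨ (∫ x, (η x - rsiSL B x)) < 1 / (k : ℝ)) with hInvDef
  have step : ∀ (k : ℕ) (B : List (ℝ × ℝ)), ∃ B' : List (ℝ × ℝ),
      Inv k B → (Inv (k + 1) B' ∧ B <+: B') := by
    intro k B
    by_cases hB : Inv k B
    · obtain ⟨hB1, hB2, hB3, _⟩ := hB
      set g : ℝ → ℝ := fun x => η x - rsiSL B x with hg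
      have hg0 : ∀ x, 0 ≤ g x := fun x => sub_nonneg.2 (hB2 x)
      have hgM : ∀ x, g x ≤ M := fun x => by
        have := rsiSL_nonneg hB1 x
        have := hMb x
        simp only [hg]; linarith
      have hgsupp : ∀ x ∉ Set.Icc (-R) R, g x = 0 := by
        intro x hx
        have h1 := hsuppR x hx
        have h2 := hB2 x
        have h3 := rsiSL_nonneg hB1 x
        simp only [hg]; linarith
      have hgcont : ∀ᵐ x : ℝ ∂volume, ContinuousAt g x := by
        filter_upwards [hcont, rsiSL_ae_continuousAt B] with x h1 h2
        exact h1.sub h2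
      have hε : (0:ℝ) < 1 / ((k:ℝ) + 1) := by positivity
      obtain ⟨L, hL1, hL2, hL3⟩ := rsi_stage M R hR0 hM0 g hg0 hgM hgsupp hgcont _ hε
      refine ⟨(B ++ L) ++ [((0:ℝ), (0:ℝ))], fun _ => ⟨⟨?_, ?_, ?_, ?_⟩, ?_⟩⟩
      · intro p hp
        simp only [List.mem_append, List.mem_singleton] at hp
        rcases hp with (hp | hp) | hp
        · exact hB1 p hp
        · exact hL1 p hp
        · rw [hp]
      · intro x
        have hz : rsiSL [((0:ℝ), (0:ℝ))] x = 0 := by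
          unfold rsiSL rsiTerm; simp
        rw [rsiSL_append, rsiSL_append, hz, add_zero]
        have := hL2 x
        simp only [hg] at this
        linarith
      · simp only [List.length_append, List.length_singleton]
        omega
      · right
        have hptw : (fun x => η x - rsiSL ((B ++ L) ++ [((0:ℝ), (0:ℝ))]) x)
            = fun x => g x - rsiSL L x := by
          funext x
          have hz : rsiSL [((0:ℝ), (0:ℝ))] x = 0 := by
            unfold rsiSL rsiTerm; simp
          rw [rsiSL_append, rsiSL_append, hz, add_zero]
          simp only [hg]; ring
        rw [hptw]
        convert hL3 using 2
        push_cast; ring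
      · refine ⟨L ++ [((0:ℝ), (0:ℝ))], ?_⟩
        rw [List.append_assoc]
    · exact ⟨B, fun h => absurd h hB⟩
  choose f hf using step
  set seq : ℕ → List (ℝ × ℝ) := fun k => Nat.rec [] (fun k B => f k B) k with hseq
  have hseqS : ∀ k, seq (k + 1) = f k (seq k) := fun k => rfl
  have hInv0 : Inv 0 (seq 0) := by
    refine ⟨by simp [hseq], fun x => ?_, by simp [hseq], Or.inl rfl⟩
    have : rsiSL (seq 0) x = 0 := rfl
    rw [this]; exact hnonneg x
  have hInvAll : ∀ k, Inv k (seq k) := by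
    intro k
    induction k with
    | zero => exact hInv0
    | succ k ih =>
      rw [hseqS]
      exact (hf k (seq k) ih).1
  have hpre : ∀ k, seq k <+: seq (k + 1) := by
    intro k
    rw [hseqS]
    exact (hf k (seq k) (hInvAll k)).2
  have hchain : ∀ k k', k ≤ k' → seq k <+: seq k' := by
    intro k k' hkk'
    induction k', hkk' using Nat.le_induction with
    | base => exact List.prefix_refl _
    | succ n hn ih => exact ih.trans (hpre n)
  -- the final sequence
  set C : ℕ → ℝ := fun m => ((seq (m + 1)).getD m (0, 0)).1 with hC
  set D : ℕ → ℝ := fun m => ((seq (m + 1)).getD m (0, 0)).2 with hD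
  have hlen : ∀ k, k ≤ (seq k).length := fun k => (hInvAll k).2.2.1
  have hstab : ∀ k m, m < (seq k).length → (seq k).getD m (0, 0) = (C m, D m) := by
    intro k m hm
    have h1 := hchain k (max k (m + 1)) (le_max_left _ _)
    have h2 := hchain (m + 1) (max k (m + 1)) (le_max_right _ _)
    obtain ⟨t1, ht1⟩ := h1
    obtain ⟨t2, ht2⟩ := h2
    have hm2 : m < (seq (m + 1)).length := lt_of_lt_of_le (Nat.lt_succ_self m) (hlen (m + 1))
    have e1 : (seq (max k (m + 1))).getD m (0, 0) = (seq k).getD m (0, 0) := by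
      rw [← ht1, List.getD_append _ _ _ _ hm]
    have e2 : (seq (max k (m + 1))).getD m (0, 0) = (seq (m + 1)).getD m (0, 0) := by
      rw [← ht2, List.getD_append _ _ _ _ hm2]
    rw [← e1, e2, hC, hD]
  have hcd : ∀ m, C m ≤ D m := by
    intro m
    have hm2 : m < (seq (m + 1)).length := lt_of_lt_of_le (Nat.lt_succ_self m) (hlen (m + 1))
    have hmem : (seq (m + 1)).getD m (0, 0) ∈ seq (m + 1) := by
      rw [List.getD_eq_getElem _ _ hm2]
      exact List.getElem_mem _
    exact (hInvAll (m + 1)).1 _ hmem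
  -- partial sums
  set T : ℕ → ℝ → ℝ := fun N x => ∑ m ∈ Finset.range N,
      (D m - C m) * (Set.Ioo (C m) (D m)).indicator (fun _ => (1 : ℝ)) x with hT
  have hTterm : ∀ N x, T N x = ∑ m ∈ Finset.range N, rsiTerm (C m, D m) x := by
    intro N x; rfl
  have hTle : ∀ N x, T N x ≤ η x := by
    intro N x
    rw [hTterm]
    have hlenN := hlen N
    have e1 : ∀ m ∈ Finset.range N, rsiTerm (C m, D m) x
        = rsiTerm ((seq N).getD m (0, 0)) x := by
      intro m hm
      rw [hstab N m (lt_of_lt_of_le (Finset.mem_range.1 hm) hlenN)]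
    rw [Finset.sum_congr rfl e1]
    calc ∑ m ∈ Finset.range N, rsiTerm ((seq N).getD m (0, 0)) x
        ≤ ∑ m ∈ Finset.range (seq N).length, rsiTerm ((seq N).getD m (0, 0)) x := by
          apply Finset.sum_le_sum_of_subset_of_nonneg
          · exact Finset.range_subset_range.2 hlenN
          · intro m hm _
            have hm2 : m < (seq N).length := Finset.mem_range.1 hm
            have hmem : (seq N).getD m (0, 0) ∈ seq N := by
              rw [List.getD_eq_getElem _ _ hm2]
              exact List.getElem_mem _
            exact rsiTerm_nonneg ((hInvAll N).1 _ hmem) x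
      _ = rsiSL (seq N) x := by
          unfold rsiSL
          exact list_sum_range_getD (seq N) (fun p => rsiTerm p x)
      _ ≤ η x := (hInvAll N).2.1 x
  have hTint : ∀ N, Integrable (T N) := by
    intro N
    have h : T N = fun x => ∑ m ∈ Finset.range N, rsiTerm (C m, D m) x :=
      funext (hTterm N)
    rw [h]
    exact integrable_finset_sum _ (fun m _ => rsiTerm_integrable _)
  have hPN : ∀ N, ∫ x, T N x = ∑ m ∈ Finset.range N, (D m - C m) ^ 2 := by
    intro N
    have : (fun x => T N x) = fun x => ∑ m ∈ Finset.range N, rsiTerm (C m, D m) x := by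
      funext x; exact hTterm N x
    rw [this, integral_finset_sum _ (fun m _ => rsiTerm_integrable _)]
    exact Finset.sum_congr rfl fun m _ => rsiTerm_integral (hcd m)
  have hPle : ∀ N, ∑ m ∈ Finset.range N, (D m - C m) ^ 2 ≤ ∫ x, η x := by
    intro N
    rw [← hPN]
    exact integral_mono (hTint N) hη_int (hTle N)
  have hsummable : Summable (fun m => (D m - C m) ^ 2) :=
    summable_of_sum_range_le (fun m => sq_nonneg _) hPle
  -- the integral error
  have hFeq : ∀ N, (∫ x, |η x - T N x|)
      = (∫ x, η x) - ∑ m ∈ Finset.range N, (D m - C m) ^ 2 := by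
    intro N
    have h1 : (fun x => |η x - T N x|) = fun x => η x - T N x := by
      funext x
      exact abs_of_nonneg (sub_nonneg.2 (hTle N x))
    rw [h1, integral_sub hη_int (hTint N), hPN]
  -- at checkpoint lengths
  have hCheck : ∀ k : ℕ, 1 ≤ k →
      (∫ x, η x) - ∑ m ∈ Finset.range (seq k).length, (D m - C m) ^ 2 < 1 / (k : ℝ) := by
    intro k hk
    have hTeq : ∀ x, T (seq k).length x = rsiSL (seq k) x := by
      intro x
      rw [hTterm]
      have e1 : ∀ m ∈ Finset.range (seq k).length, rsiTerm (C m, D m) x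
          = rsiTerm ((seq k).getD m (0, 0)) x := by
        intro m hm
        rw [hstab k m (Finset.mem_range.1 hm)]
      rw [Finset.sum_congr rfl e1]
      unfold rsiSL
      exact list_sum_range_getD (seq k) (fun p => rsiTerm p x)
    have h2 : ∑ m ∈ Finset.range (seq k).length, (D m - C m) ^ 2
        = ∫ x, rsiSL (seq k) x := by
      rw [← hPN]
      exact integral_congr_ae (Filter.Eventually.of_forall hTeq)
    rw [h2]
    have h3 := (hInvAll k).2.2.2.resolve_left (by omega)
    rw [integral_sub hη_int (rsiSL_integrable _)] at h3
    exact h3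
  -- conclude
  refine ⟨C, D, hcd, hsummable, fun N x => hTle N x, ?_⟩
  rw [Metric.tendsto_atTop]
  intro ε hε
  obtain ⟨n, hn⟩ := exists_nat_one_div_lt hε
  refine ⟨(seq (n + 1)).length, fun N hN => ?_⟩
  have hmono : ∑ m ∈ Finset.range (seq (n + 1)).length, (D m - C m) ^ 2
      ≤ ∑ m ∈ Finset.range N, (D m - C m) ^ 2 := by
    apply Finset.sum_le_sum_of_subset_of_nonneg (Finset.range_subset_range.2 hN)
    intro m _ _; exact sq_nonneg _
  have hFN : (∫ x, |η x - T N x|) < ε := by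
    rw [hFeq]
    have h1 := hCheck (n + 1) (by omega)
    have h2 : (1 : ℝ) / ((n:ℝ) + 1) < ε := hn
    push_cast at h1
    linarith
  have hF0 : 0 ≤ ∫ x, |η x - T N x| := integral_nonneg (fun x => abs_nonneg _)
  rw [Real.dist_eq, sub_zero, abs_of_nonneg hF0]
  exact hFN
end

section
/- (Aronszajn–Krein formula.) Let H be a complex Hilbert space, B a bounded self-adjoint operator on H, φ ∈ H a unit vector, α ∈ ℝ, and let A_α = B + α·P_φ where P_φ is the rank-one operator u ↦ ⟨φ,u⟩·φ. Let z ∈ ℂ with Im z ≠ 0. Then B − zI and A_α − zI are invertible bounded operators, 1 + α·⟨φ, (B−zI)⁻¹φ⟩ ≠ 0, and ⟨φ, (A_α − zI)⁻¹ φ⟩ = ⟨φ, (B−zI)⁻¹φ⟩ / (1 + α·⟨φ, (B−zI)⁻¹φ⟩). -/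
/-- **Aronszajn–Krein formula.** For a bounded self-adjoint operator `B`, a unit
vector `φ`, `α ∈ ℝ`, `A_α = B + α·⟨φ,·⟩φ` and `Im z ≠ 0`: both resolvents exist,
`1 + α⟨φ,(B−z)⁻¹φ⟩ ≠ 0`, and
`⟨φ,(A_α−z)⁻¹φ⟩ = ⟨φ,(B−z)⁻¹φ⟩/(1 + α⟨φ,(B−z)⁻¹φ⟩)`. -/
theorem aronszajn_krein {H : Type*} [NormedAddCommGroup H] [InnerProductSpace ℂ H]
    [CompleteSpace H] (B : H →L[ℂ] H) (hB : IsSelfAdjoint B)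
    (φ : H) (hφ : ‖φ‖ = 1) (α : ℝ) (z : ℂ) (hz : z.im ≠ 0) :
    IsUnit (B - z • (1 : H →L[ℂ] H)) ∧
    IsUnit (B + (α : ℂ) • (innerSL ℂ φ).smulRight φ - z • (1 : H →L[ℂ] H)) ∧
    1 + (α : ℂ) * (inner ℂ φ (Ring.inverse (B - z • (1 : H →L[ℂ] H)) φ) : ℂ) ≠ 0 ∧
    (inner ℂ φ
        (Ring.inverse (B + (α : ℂ) • (innerSL ℂ φ).smulRight φ - z • (1 : H →L[ℂ] H)) φ) : ℂ)
      = (inner ℂ φ (Ring.inverse (B - z • (1 : H →L[ℂ] H)) φ) : ℂ) /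
          (1 + (α : ℂ) * (inner ℂ φ (Ring.inverse (B - z • (1 : H →L[ℂ] H)) φ) : ℂ)) := by
  set P : H →L[ℂ] H := (innerSL ℂ φ).smulRight φ with hPdef
  -- self-adjointness of the perturbation
  have hPsa : IsSelfAdjoint ((α : ℂ) • P) := by
    rw [ContinuousLinearMap.isSelfAdjoint_iff_isSymmetric]
    intro x y
    simp only [hPdef, ContinuousLinearMap.coe_coe, ContinuousLinearMap.smul_apply,
      ContinuousLinearMap.smulRight_apply, innerSL_apply_apply]
    rw [inner_smul_left, inner_smul_right, inner_smul_left, inner_smul_right,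
      inner_conj_symm, Complex.conj_ofReal]
    ring
  -- invertibility of T - z for selfadjoint T
  have key : ∀ (T : H →L[ℂ] H), IsSelfAdjoint T → IsUnit (T - z • (1 : H →L[ℂ] H)) := by
    intro T hT
    have h1 : z ∉ spectrum ℂ T := by
      intro h
      exact hz (by rw [hT.mem_spectrum_eq_re h]; simp)
    rw [spectrum.notMem_iff] at h1
    simpa [Algebra.algebraMap_eq_smul_one, neg_sub] using h1.neg
  have hN : IsUnit (B - z • (1 : H →L[ℂ] H)) := key B hB
  have hM : IsUnit (B + (α : ℂ) • P - z • (1 : H →L[ℂ] H)) := key _ (hB.add hPsa)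
  set N : H →L[ℂ] H := B - z • 1 with hNdef
  set R : H →L[ℂ] H := Ring.inverse N with hRdef
  set ψ : H := R φ with hψdef
  set c : ℂ := inner ℂ φ ψ with hcdef
  have hNψ : N ψ = φ := by
    have := congrArg (fun T : H →L[ℂ] H => T φ) (Ring.mul_inverse_cancel N hN)
    simpa [ContinuousLinearMap.mul_apply] using this
  have hψne : ψ ≠ 0 := by
    intro h
    rw [h, map_zero] at hNψ
    rw [← hNψ, norm_zero] at hφ
    norm_num at hφ
  -- imaginary part of c
  have hBψ : (inner ℂ (B ψ) ψ : ℂ).im = 0 := by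
    have hsym := (ContinuousLinearMap.isSelfAdjoint_iff_isSymmetric.mp hB) ψ ψ
    have : (starRingEnd ℂ) (inner ℂ (B ψ) ψ : ℂ) = (inner ℂ (B ψ) ψ : ℂ) := by
      rw [inner_conj_symm]
      exact hsym.symm
    exact Complex.conj_eq_iff_im.mp this
  have hc_im : c.im = z.im * ‖ψ‖ ^ 2 := by
    have h1 : c = inner ℂ (B ψ) ψ - (starRingEnd ℂ) z * (inner ℂ ψ ψ) := by
      rw [hcdef, ← hNψ, hNdef]
      simp only [ContinuousLinearMap.sub_apply, ContinuousLinearMap.smul_apply,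
        ContinuousLinearMap.one_apply, inner_sub_left, inner_smul_left]
    have h2 : (inner ℂ ψ ψ : ℂ) = ((‖ψ‖ ^ 2 : ℝ) : ℂ) := by
      rw [inner_self_eq_norm_sq_to_K]; norm_cast
    rw [h1, h2]
    simp [Complex.sub_im, Complex.mul_im, hBψ, Complex.conj_re, Complex.conj_im,
      Complex.ofReal_re, Complex.ofReal_im]
    rw [← Complex.ofReal_pow, Complex.ofReal_re, Complex.ofReal_im]
    ring
  have hd : (1 : ℂ) + (α : ℂ) * c ≠ 0 := by
    rcases eq_or_ne α 0 with h | h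
    · simp [h]
    · intro hcon
      have him : ((1 : ℂ) + (α : ℂ) * c).im = 0 := by rw [hcon]; simp
      simp only [Complex.add_im, Complex.one_im, Complex.mul_im, Complex.ofReal_re,
        Complex.ofReal_im, zero_add, zero_mul, add_zero, hc_im] at him
      have : ‖ψ‖ ≠ 0 := norm_ne_zero_iff.mpr hψne
      have := mul_ne_zero h (mul_ne_zero hz (pow_ne_zero 2 this))
      rw [← mul_assoc] at him
      exact this (by linarith [him])
  refine ⟨hN, hM, hd, ?_⟩
  set M : H →L[ℂ] H := B + (α : ℂ) • P - z • 1 with hMdef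
  set w : H := Ring.inverse M φ with hwdef
  set g : ℂ := inner ℂ φ w with hgdef
  have hMw : M w = φ := by
    have := congrArg (fun T : H →L[ℂ] H => T φ) (Ring.mul_inverse_cancel M hM)
    simpa [ContinuousLinearMap.mul_apply] using this
  have hNw : N w = φ - ((α : ℂ) * g) • φ := by
    have h1 : M w = N w + ((α : ℂ) * g) • φ := by
      simp only [hMdef, hNdef, ContinuousLinearMap.sub_apply, ContinuousLinearMap.add_apply,
        ContinuousLinearMap.smul_apply, ContinuousLinearMap.one_apply, hPdef,
        ContinuousLinearMap.smulRight_apply, innerSL_apply_apply, ← hgdef, smul_smul]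
      abel
    rw [h1] at hMw
    rw [eq_sub_iff_add_eq]
    exact hMw
  have hRN : ∀ x : H, R (N x) = x := by
    intro x
    have := congrArg (fun T : H →L[ℂ] H => T x) (Ring.inverse_mul_cancel N hN)
    simpa [ContinuousLinearMap.mul_apply] using this
  have hw : w = ψ - ((α : ℂ) * g) • ψ := by
    have := congrArg R hNw
    rw [hRN] at this
    rw [this]
    simp [hψdef, map_sub, map_smul]
  have hgc : g = c - (α : ℂ) * g * c := by
    conv_lhs => rw [hgdef, hw]
    rw [inner_sub_right, inner_smul_right, ← hcdef]
  rw [eq_div_iff hd]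
  calc g * (1 + (α : ℂ) * c) = (c - (α : ℂ) * g * c) + (α : ℂ) * g * c := by
        rw [← hgc]; ring
    _ = c := by ring
end

section
/- (Perturbation determinant identity, finite-dimensional case.) Let A, B be n×n Hermitian complex matrices, set X = A − B, let φ ∈ ℂⁿ be a unit vector, let P_φ be the rank-one matrix u ↦ ⟨φ,u⟩·φ, and let z ∈ ℂ with Im z ≠ 0. Then det(I − (X + P_φ)·(A − zI)⁻¹) = (1 − ⟨φ, (B − zI)⁻¹ φ⟩) · det(I − X·(A − zI)⁻¹). -/
open Matrix

lemma aux_isUnit_det_sub_smul {n : ℕ} {M : Matrix (Fin n) (Fin n) ℂ}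
    (hM : M.IsHermitian) {z : ℂ} (hz : z.im ≠ 0) :
    IsUnit (M - z • (1 : Matrix (Fin n) (Fin n) ℂ)).det := by
  rw [isUnit_iff_ne_zero]
  intro hdet
  obtain ⟨v, hv, hv0⟩ := (Matrix.exists_mulVec_eq_zero_iff).2 hdet
  have hMv : M *ᵥ v = z • v := by
    have := hv0
    rw [Matrix.sub_mulVec, Matrix.smul_mulVec, Matrix.one_mulVec, sub_eq_zero] at this
    exact this
  set d : ℂ := star v ⬝ᵥ v with hd
  have hd' : d = ((∑ i, Complex.normSq (v i) : ℝ) : ℂ) := by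
    rw [hd]
    simp only [dotProduct, Pi.star_apply, Complex.star_def]
    push_cast
    refine Finset.sum_congr rfl fun i _ => ?_
    rw [mul_comm, Complex.mul_conj]
  have hsum : (∑ i, Complex.normSq (v i) : ℝ) ≠ 0 := by
    intro h
    apply hv
    funext i
    have hle : ∀ j ∈ Finset.univ, (0:ℝ) ≤ Complex.normSq (v j) :=
      fun j _ => Complex.normSq_nonneg _
    have := (Finset.sum_eq_zero_iff_of_nonneg hle).1 h i (Finset.mem_univ i)
    simpa using Complex.normSq_eq_zero.1 this
  set c : ℂ := star v ⬝ᵥ (M *ᵥ v) with hc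
  have hc1 : c = z * d := by
    rw [hc, hMv, dotProduct_smul, hd, smul_eq_mul]
  have hcreal : star c = c := by
    rw [hc, ← Matrix.star_dotProduct_star, star_star, Matrix.star_mulVec, hM,
      ← Matrix.dotProduct_mulVec]
  have hcim : c.im = 0 := by
    have := congrArg Complex.im hcreal
    simp only [Complex.star_def, Complex.conj_im] at this
    linarith
  rw [hc1, hd'] at hcim
  simp [Complex.mul_im] at hcim
  rcases hcim with h | h
  · exact hz h
  · exact hsum h

lemma aux_mul_vecMulVec {n : ℕ} (M : Matrix (Fin n) (Fin n) ℂ) (u v : Fin n → ℂ) :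
    M * Matrix.vecMulVec u v = Matrix.vecMulVec (M *ᵥ u) v := by
  ext i j
  simp [Matrix.mul_apply, Matrix.vecMulVec_apply, Matrix.mulVec, dotProduct,
    Finset.sum_mul, mul_assoc]

lemma aux_det_one_sub_vecMulVec {n : ℕ} (u v : Fin n → ℂ) :
    Matrix.det (1 - Matrix.vecMulVec u v) = 1 - v ⬝ᵥ u := by
  have h := Matrix.det_one_add_replicateCol_mul_replicateRow (ι := Unit) (-u) v
  have h1 : (1 : Matrix (Fin n) (Fin n) ℂ) - Matrix.vecMulVec u v
      = 1 + Matrix.replicateCol Unit (-u) * Matrix.replicateRow Unit v := by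
    ext i j
    simp [Matrix.vecMulVec_apply, Matrix.mul_apply, sub_eq_add_neg, neg_mul]
  rw [h1, h]
  simp [sub_eq_add_neg]

/-- **Perturbation determinant identity, finite-dimensional case.** For Hermitian
matrices `A`, `B`, `X = A − B`, a unit vector `φ` with `P_φ = ⟨φ,·⟩φ`, and
`Im z ≠ 0`: `det(I − (X+P_φ)(A−z)⁻¹) = (1 − ⟨φ,(B−z)⁻¹φ⟩)·det(I − X(A−z)⁻¹)`. -/
theorem perturbation_determinant_identity_finiteDim {n : ℕ}
    (A B : Matrix (Fin n) (Fin n) ℂ) (hA : A.IsHermitian) (hB : B.IsHermitian)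
    (X : Matrix (Fin n) (Fin n) ℂ) (hX : X = A - B)
    (φ : Fin n → ℂ) (hφ : star φ ⬝ᵥ φ = 1) (z : ℂ) (hz : z.im ≠ 0) :
    Matrix.det ((1 : Matrix (Fin n) (Fin n) ℂ)
        - (X + Matrix.vecMulVec φ (star φ)) * (A - z • (1 : Matrix (Fin n) (Fin n) ℂ))⁻¹)
      = (1 - star φ ⬝ᵥ ((B - z • (1 : Matrix (Fin n) (Fin n) ℂ))⁻¹ *ᵥ φ)) *
          Matrix.det ((1 : Matrix (Fin n) (Fin n) ℂ)
            - X * (A - z • (1 : Matrix (Fin n) (Fin n) ℂ))⁻¹) := by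
  set Az := A - z • (1 : Matrix (Fin n) (Fin n) ℂ) with hAzdef
  set Bz := B - z • (1 : Matrix (Fin n) (Fin n) ℂ) with hBzdef
  have hAz : IsUnit Az.det := aux_isUnit_det_sub_smul hA hz
  have hBz : IsUnit Bz.det := aux_isUnit_det_sub_smul hB hz
  have hAzinv : Az * Az⁻¹ = 1 := Matrix.mul_nonsing_inv _ hAz
  have key : (1 : Matrix (Fin n) (Fin n) ℂ) - X * Az⁻¹ = Bz * Az⁻¹ := by
    have hXB : Bz = Az - X := by
      rw [hX, hAzdef, hBzdef]; abel
    rw [hXB, Matrix.sub_mul, hAzinv]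
  have key2 : (1 : Matrix (Fin n) (Fin n) ℂ)
      - (X + Matrix.vecMulVec φ (star φ)) * Az⁻¹
      = (Bz - Matrix.vecMulVec φ (star φ)) * Az⁻¹ := by
    rw [Matrix.sub_mul, ← key, Matrix.add_mul]; abel
  have key3 : Bz - Matrix.vecMulVec φ (star φ)
      = Bz * (1 - Matrix.vecMulVec (Bz⁻¹ *ᵥ φ) (star φ)) := by
    rw [Matrix.mul_sub, mul_one, aux_mul_vecMulVec,
      Matrix.mulVec_mulVec, Matrix.mul_nonsing_inv _ hBz, Matrix.one_mulVec]
  rw [key2, key, Matrix.det_mul, Matrix.det_mul, key3, Matrix.det_mul,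
    aux_det_one_sub_vecMulVec]
  ring
end
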